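/- arXiv:1601.07743 — 5 statements merged into one kernel-verified Lean document; each statement's English description precedes it below -/
import Mathlib

section
/- For every λ > 0, n ∈ ℕ₀ and x ∈ [−1,1], d/dx{(1+x) C_n^λ(x)} = (n+1) C_n^λ(x) + 2 Σ_{k=0}^{n−1} (k+λ) C_k^λ(x). -/
open Real MeasureTheory Finset intervalIntegral

noncomputable section

/-- The Gegenbauer (ultraspherical) polynomial `C_n^λ`. -/
def Gegenbauer (lam : ℝ) (n : ℕ) (x : ℝ) : ℝ :=
  ∑ k ∈ Finset.range (n / 2 + 1),
    ((-1 : ℝ) ^ k * Real.Gamma ((n : ℝ) - (k : ℝ) + lam) /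
      (Real.Gamma lam * (Nat.factorial k : ℝ) * (Nat.factorial (n - 2 * k) : ℝ))) *
      (2 * x) ^ (n - 2 * k)

/-- The terminating hypergeometric polynomial `₂F₁(−m, b; c; z)`. -/
def hyp2F1 (m : ℕ) (b c z : ℝ) : ℝ :=
  ∑ k ∈ Finset.range (m + 1),
    ((ascPochhammer ℝ k).eval (-(m : ℝ)) * (ascPochhammer ℝ k).eval b) /
      ((ascPochhammer ℝ k).eval c * (Nat.factorial k : ℝ)) * z ^ k

/-- The half-step fractional integral `I^λ_+`. -/
def Iplus (lam : ℝ) (f : ℝ → ℝ) (x : ℝ) : ℝ :=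
  (1 + x) ^ (-lam + 1 / 2) *
    ∫ τ in (-1 : ℝ)..x, (x - τ) ^ (-(1 / 2) : ℝ) * (1 + τ) ^ lam * f τ

/-- The half-step fractional integral `I^λ_−`. -/
def Iminus (lam : ℝ) (f : ℝ → ℝ) (x : ℝ) : ℝ :=
  (1 - x) ^ (-lam + 1 / 2) *
    ∫ τ in x..(1 : ℝ), (τ - x) ^ (-(1 / 2) : ℝ) * (1 - τ) ^ lam * f τ

/-- `𝓘^λ_+ = I^λ_+ + I^λ_−`. -/
def calIplus (lam : ℝ) (f : ℝ → ℝ) (x : ℝ) : ℝ := Iplus lam f x + Iminus lam f x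

/-- `𝓘^λ_− = I^λ_+ − I^λ_−`. -/
def calIminus (lam : ℝ) (f : ℝ → ℝ) (x : ℝ) : ℝ := Iplus lam f x - Iminus lam f x

/-- The half-step fractional derivative `D^λ_+`. -/
def Dplus (lam : ℝ) (f : ℝ → ℝ) (x : ℝ) : ℝ :=
  (1 + x) *
    deriv (fun y : ℝ => (1 + y) ^ (-lam) *
      ∫ τ in (-1 : ℝ)..y, (y - τ) ^ (-(1 / 2) : ℝ) * (1 + τ) ^ (lam - 1 / 2) * f τ) x

/-- The half-step fractional derivative `D^λ_−`. -/
def Dminus (lam : ℝ) (f : ℝ → ℝ) (x : ℝ) : ℝ :=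
  (1 - x) *
    deriv (fun y : ℝ => (1 - y) ^ (-lam) *
      ∫ τ in y..(1 : ℝ), (τ - y) ^ (-(1 / 2) : ℝ) * (1 - τ) ^ (lam - 1 / 2) * f τ) x

/-- `𝓓^λ_+ = D^λ_+ + D^λ_−`. -/
def calDplus (lam : ℝ) (f : ℝ → ℝ) (x : ℝ) : ℝ := Dplus lam f x + Dminus lam f x

/-- `𝓓^λ_− = D^λ_+ − D^λ_−`. -/
def calDminus (lam : ℝ) (f : ℝ → ℝ) (x : ℝ) : ℝ := Dplus lam f x - Dminus lam f x

/-- Normalization constant `h_n^λ` for the Gegenbauer system. -/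
def hGeg (lam : ℝ) (n : ℕ) : ℝ :=
  Real.pi * Real.Gamma (2 * lam + n) /
    ((2 : ℝ) ^ (2 * lam - 1) * (Nat.factorial n : ℝ) * (lam + n) * (Real.Gamma lam) ^ 2)

/-- The `n`-th Gegenbauer coefficient (parameter `λ`) of `g`. -/
def gegCoeff (lam : ℝ) (g : ℝ → ℝ) (n : ℕ) : ℝ :=
  (1 / hGeg lam n) *
    ∫ t in (-1 : ℝ)..1, g t * Gegenbauer lam n t * (1 - t ^ 2) ^ (lam - 1 / 2)

/-- The Chebyshev polynomial of the first kind, as a real function. -/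
def chebT (n : ℕ) (x : ℝ) : ℝ := (Polynomial.Chebyshev.T ℝ (n : ℤ)).eval x

/-- The `n`-th Chebyshev coefficient of `f`. -/
def chebCoeff (f : ℝ → ℝ) (n : ℕ) : ℝ :=
  if n = 0 then
    (1 / Real.pi) * ∫ t in (-1 : ℝ)..1, f t * (1 - t ^ 2) ^ (-(1 / 2) : ℝ)
  else
    (2 / Real.pi) * ∫ t in (-1 : ℝ)..1, f t * chebT n t * (1 - t ^ 2) ^ (-(1 / 2) : ℝ)

/-- The Legendre polynomial `P_n = C_n^{1/2}`. -/
def legendreP (n : ℕ) (x : ℝ) : ℝ := Gegenbauer (1 / 2) n x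

/-- The `n`-th Legendre coefficient of `g`. -/
def legCoeff (g : ℝ → ℝ) (n : ℕ) : ℝ :=
  ((2 * (n : ℝ) + 1) / 2) * ∫ x in (-1 : ℝ)..1, g x * legendreP n x

/-- `f` is (zonal) positive definite on the sphere `S^m ⊂ ℝ^{m+1}`. -/
def PosDefSphere (m : ℕ) (f : ℝ → ℝ) : Prop :=
  ∀ (n : ℕ) (x : Fin n → EuclideanSpace ℝ (Fin (m + 1))),
    (∀ i, ‖x i‖ = 1) → Function.Injective x →
      ∀ c : Fin n → ℝ,
        0 ≤ ∑ i : Fin n, ∑ j : Fin n, c i * c j * f (inner ℝ (x i) (x j) : ℝ)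

/-- `f` is (zonal) strictly positive definite on the sphere `S^m ⊂ ℝ^{m+1}`. -/
def StrictPosDefSphere (m : ℕ) (f : ℝ → ℝ) : Prop :=
  ∀ (n : ℕ) (x : Fin n → EuclideanSpace ℝ (Fin (m + 1))),
    (∀ i, ‖x i‖ = 1) → Function.Injective x →
      ∀ c : Fin n → ℝ, c ≠ 0 →
        0 < ∑ i : Fin n, ∑ j : Fin n, c i * c j * f (inner ℝ (x i) (x j) : ℝ)

/-- `f ∈ Λ_m`: continuous on `[−1,1]` and positive definite on `S^m`. -/
def MemLambda (m : ℕ) (f : ℝ → ℝ) : Prop :=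
  ContinuousOn f (Set.Icc (-1 : ℝ) 1) ∧ PosDefSphere m f

/-- `f ∈ Λ^+_m`: continuous on `[−1,1]` and strictly positive definite on `S^m`. -/
def MemLambdaPlus (m : ℕ) (f : ℝ → ℝ) : Prop :=
  ContinuousOn f (Set.Icc (-1 : ℝ) 1) ∧ StrictPosDefSphere m f

end

noncomputable def gc (lam : ℝ) (n k : ℕ) : ℝ :=
  (-1 : ℝ) ^ k * Real.Gamma ((n : ℝ) - (k : ℝ) + lam) /
    (Real.Gamma lam * (Nat.factorial k : ℝ) * (Nat.factorial (n - 2 * k) : ℝ))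

lemma Geg_eq (lam : ℝ) (n : ℕ) (x : ℝ) :
    Gegenbauer lam n x = ∑ k ∈ Finset.range (n / 2 + 1), gc lam n k * (2 * x) ^ (n - 2 * k) := rfl

noncomputable def gD (lam : ℝ) (n : ℕ) (x : ℝ) : ℝ :=
  ∑ k ∈ Finset.range (n / 2 + 1),
    gc lam n k * (((n - 2 * k : ℕ) : ℝ) * (2 * x) ^ (n - 2 * k - 1) * 2)

lemma hasDerivAt_Geg (lam : ℝ) (n : ℕ) (x : ℝ) :
    HasDerivAt (Gegenbauer lam n) (gD lam n x) x := by
  have : ∀ y, Gegenbauer lam n y = ∑ k ∈ Finset.range (n / 2 + 1), gc lam n k * (2 * y) ^ (n - 2 * k) :=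
    fun y => rfl
  rw [show (Gegenbauer lam n) = fun y => ∑ k ∈ Finset.range (n / 2 + 1), gc lam n k * (2 * y) ^ (n - 2 * k) from funext this]
  unfold gD
  apply HasDerivAt.fun_sum
  intro k hk
  have h1 : HasDerivAt (fun y : ℝ => 2 * y) 2 x := by
    simpa using (hasDerivAt_id x).const_mul (2:ℝ)
  have h2 := (h1.fun_pow (n - 2*k)).const_mul (gc lam n k)
  convert h2 using 1

lemma gamma_ne (lam : ℝ) (hlam : 0 < lam) : Real.Gamma lam ≠ 0 :=
  (Real.Gamma_pos_of_pos hlam).ne'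

lemma gcI (lam : ℝ) (hlam : 0 < lam) (n k : ℕ) (h : 2 * k < n) :
    ((k : ℝ) + 1) * gc lam (n + 1) (k + 1) = -(((n : ℝ) - 2 * k)) * gc lam n k := by
  obtain ⟨m, rfl⟩ : ∃ m, n = 2 * k + m + 1 := ⟨n - (2 * k + 1), by omega⟩
  unfold gc
  rw [show 2 * k + m + 1 - 2 * k = m + 1 from by omega,
      show 2 * k + m + 1 + 1 - 2 * (k + 1) = m from by omega,
      show ((2 * k + m + 1 + 1 : ℕ) : ℝ) - ((k + 1 : ℕ) : ℝ) + lam = (k : ℝ) + m + 1 + lam from by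
        push_cast; ring,
      show ((2 * k + m + 1 : ℕ) : ℝ) - ((k : ℕ) : ℝ) + lam = (k : ℝ) + m + 1 + lam from by
        push_cast; ring,
      Nat.factorial_succ (k), Nat.factorial_succ (m)]
  have hΓ := gamma_ne lam hlam
  have hk : ((Nat.factorial k : ℝ)) ≠ 0 := Nat.cast_ne_zero.mpr (Nat.factorial_ne_zero k)
  have hm : ((Nat.factorial m : ℝ)) ≠ 0 := Nat.cast_ne_zero.mpr (Nat.factorial_ne_zero m)
  push_cast
  field_simp
  ring

lemma gcII (lam : ℝ) (hlam : 0 < lam) (n k : ℕ) (h : 2 * k < n) :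
    ((n : ℝ) - 2 * k) * (gc lam (n + 2) (k + 1) - gc lam n k) =
      ((n : ℝ) + 1 + lam) * gc lam (n + 1) (k + 1) := by
  obtain ⟨m, rfl⟩ : ∃ m, n = 2 * k + m + 1 := ⟨n - (2 * k + 1), by omega⟩
  unfold gc
  rw [show 2 * k + m + 1 - 2 * k = m + 1 from by omega,
      show 2 * k + m + 1 + 2 - 2 * (k + 1) = m + 1 from by omega,
      show 2 * k + m + 1 + 1 - 2 * (k + 1) = m from by omega,
      show ((2 * k + m + 1 + 2 : ℕ) : ℝ) - ((k + 1 : ℕ) : ℝ) + lam = ((k : ℝ) + m + 1 + lam) + 1 from by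
        push_cast; ring,
      show ((2 * k + m + 1 : ℕ) : ℝ) - ((k : ℕ) : ℝ) + lam = (k : ℝ) + m + 1 + lam from by
        push_cast; ring,
      show ((2 * k + m + 1 + 1 : ℕ) : ℝ) - ((k + 1 : ℕ) : ℝ) + lam = (k : ℝ) + m + 1 + lam from by
        push_cast; ring,
      Real.Gamma_add_one (by positivity : ((k : ℝ) + m + 1 + lam) ≠ 0),
      Nat.factorial_succ (k), Nat.factorial_succ (m)]
  have hΓ := gamma_ne lam hlam
  have hk : ((Nat.factorial k : ℝ)) ≠ 0 := Nat.cast_ne_zero.mpr (Nat.factorial_ne_zero k)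
  have hm : ((Nat.factorial m : ℝ)) ≠ 0 := Nat.cast_ne_zero.mpr (Nat.factorial_ne_zero m)
  push_cast
  field_simp
  ring

lemma gcIII (lam : ℝ) (hlam : 0 < lam) (n : ℕ) :
    ((n : ℝ) + 2) * gc lam (n + 2) 0 = ((n : ℝ) + 1 + lam) * gc lam (n + 1) 0 := by
  unfold gc
  rw [show n + 2 - 2 * 0 = (n + 1) + 1 from by omega,
      show n + 1 - 2 * 0 = n + 1 from by omega,
      show ((n + 2 : ℕ) : ℝ) - ((0 : ℕ) : ℝ) + lam = ((n : ℝ) + 1 + lam) + 1 from by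
        push_cast; ring,
      show ((n + 1 : ℕ) : ℝ) - ((0 : ℕ) : ℝ) + lam = (n : ℝ) + 1 + lam from by
        push_cast; ring,
      Real.Gamma_add_one (by positivity : ((n : ℝ) + 1 + lam) ≠ 0),
      Nat.factorial_succ (n + 1)]
  have hΓ := gamma_ne lam hlam
  have hn : ((Nat.factorial (n + 1) : ℝ)) ≠ 0 := Nat.cast_ne_zero.mpr (Nat.factorial_ne_zero _)
  push_cast
  field_simp
  ring

lemma pow_step (c x : ℝ) (m : ℕ) :
    x * (c * (((m : ℕ) : ℝ) * (2 * x) ^ (m - 1) * 2)) = c * (((m : ℕ) : ℝ) * (2 * x) ^ m) := by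
  cases m with
  | zero => simp
  | succ m => push_cast; rw [pow_succ]; ring

lemma gA (lam : ℝ) (hlam : 0 < lam) (n : ℕ) (x : ℝ) :
    x * gD lam (n + 1) x = ((n : ℝ) + 1) * Gegenbauer lam (n + 1) x + gD lam n x := by
  have lhs_eq : x * gD lam (n + 1) x =
      ∑ k ∈ Finset.range ((n + 1) / 2 + 1),
        gc lam (n + 1) k * (((n + 1 - 2 * k : ℕ) : ℝ) * (2 * x) ^ (n + 1 - 2 * k)) := by
    unfold gD
    rw [Finset.mul_sum]
    exact Finset.sum_congr rfl fun k _ => pow_step _ _ _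
  have split : ∀ k ∈ Finset.range ((n + 1) / 2 + 1),
      gc lam (n + 1) k * (((n + 1 - 2 * k : ℕ) : ℝ) * (2 * x) ^ (n + 1 - 2 * k)) =
        ((n : ℝ) + 1) * (gc lam (n + 1) k * (2 * x) ^ (n + 1 - 2 * k)) +
          gc lam (n + 1) k * (-(2 * (k : ℝ))) * (2 * x) ^ (n + 1 - 2 * k) := by
    intro k hk
    have hk' : 2 * k ≤ n + 1 := by
      have := Finset.mem_range.mp hk; omega
    rw [Nat.cast_sub hk']
    push_cast
    ring
  rw [lhs_eq, Finset.sum_congr rfl split, Finset.sum_add_distrib, ← Finset.mul_sum, ← Geg_eq]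
  congr 1
  rw [Finset.sum_range_succ']
  simp only [Nat.cast_zero, mul_zero, neg_zero, zero_mul, mul_zero, add_zero]
  have hsub : gD lam n x =
      ∑ k ∈ Finset.range ((n + 1) / 2),
        gc lam n k * (((n - 2 * k : ℕ) : ℝ) * (2 * x) ^ (n - 2 * k - 1) * 2) := by
    unfold gD
    rw [eq_comm]
    apply Finset.sum_subset
    · intro k hk
      simp only [Finset.mem_range] at *
      omega
    · intro k hk hk'
      simp only [Finset.mem_range] at *
      have : n - 2 * k = 0 := by omega
      rw [this]
      simp
  rw [hsub]
  apply Finset.sum_congr rfl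
  intro k hk
  have h2k : 2 * k < n := by
    have := Finset.mem_range.mp hk; omega
  have e1 : n + 1 - 2 * (k + 1) = n - 2 * k - 1 := by omega
  have e2 : ((n - 2 * k : ℕ) : ℝ) = (n : ℝ) - 2 * k := by
    have : 2 * k ≤ n := h2k.le
    push_cast [Nat.cast_sub this]; ring
  rw [e1, e2]
  have hI := gcI lam hlam n k h2k
  push_cast at hI ⊢
  linear_combination (-2 * (2 * x) ^ (n - 2 * k - 1)) * hI

lemma gB (lam : ℝ) (hlam : 0 < lam) (n : ℕ) (x : ℝ) :
    gD lam (n + 2) x = gD lam n x + 2 * ((n : ℝ) + 1 + lam) * Gegenbauer lam (n + 1) x := by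
  have hL : gD lam (n + 2) x =
      (∑ k ∈ Finset.range (n / 2 + 1),
        gc lam (n + 2) (k + 1) * (((n - 2 * k : ℕ) : ℝ) * (2 * x) ^ (n - 2 * k - 1) * 2))
      + gc lam (n + 2) 0 * (((n + 2 : ℕ) : ℝ) * (2 * x) ^ (n + 1) * 2) := by
    unfold gD
    rw [show (n + 2) / 2 + 1 = (n / 2 + 1) + 1 from by omega, Finset.sum_range_succ']
    congr 1
    · apply Finset.sum_congr rfl
      intro k _
      rw [show n + 2 - 2 * (k + 1) = n - 2 * k from by omega]
  have hR : Gegenbauer lam (n + 1) x =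
      (∑ k ∈ Finset.range ((n + 1) / 2),
        gc lam (n + 1) (k + 1) * (2 * x) ^ (n - 2 * k - 1)) +
        gc lam (n + 1) 0 * (2 * x) ^ (n + 1) := by
    rw [Geg_eq, Finset.sum_range_succ']
    congr 1
    · apply Finset.sum_congr rfl
      intro k _
      rw [show n + 1 - 2 * (k + 1) = n - 2 * k - 1 from by omega]
  have hf0 : gc lam (n + 2) 0 * (((n + 2 : ℕ) : ℝ) * (2 * x) ^ (n + 1) * 2) =
      2 * ((n : ℝ) + 1 + lam) * (gc lam (n + 1) 0 * (2 * x) ^ (n + 1)) := by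
    have h3 := gcIII lam hlam n
    push_cast
    linear_combination (2 * (2 * x) ^ (n + 1)) * h3
  have hdiff : ∑ k ∈ Finset.range (n / 2 + 1),
      (gc lam (n + 2) (k + 1) * (((n - 2 * k : ℕ) : ℝ) * (2 * x) ^ (n - 2 * k - 1) * 2)
        - gc lam n k * (((n - 2 * k : ℕ) : ℝ) * (2 * x) ^ (n - 2 * k - 1) * 2)) =
      ∑ k ∈ Finset.range ((n + 1) / 2),
        2 * ((n : ℝ) + 1 + lam) * (gc lam (n + 1) (k + 1) * (2 * x) ^ (n - 2 * k - 1)) := by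
    have hsub : Finset.range ((n + 1) / 2) ⊆ Finset.range (n / 2 + 1) := by
      intro k hk
      simp only [Finset.mem_range] at *
      omega
    have hz : ∀ k ∈ Finset.range (n / 2 + 1), k ∉ Finset.range ((n + 1) / 2) →
        (gc lam (n + 2) (k + 1) * (((n - 2 * k : ℕ) : ℝ) * (2 * x) ^ (n - 2 * k - 1) * 2)
          - gc lam n k * (((n - 2 * k : ℕ) : ℝ) * (2 * x) ^ (n - 2 * k - 1) * 2)) = 0 := by
      intro k hk hk'
      simp only [Finset.mem_range] at *
      rw [show n - 2 * k = 0 from by omega]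
      simp
    rw [← Finset.sum_subset hsub hz]
    apply Finset.sum_congr rfl
    intro k hk
    have h2k : 2 * k < n := by
      have := Finset.mem_range.mp hk; omega
    have e2 : ((n - 2 * k : ℕ) : ℝ) = (n : ℝ) - 2 * k := by
      push_cast [Nat.cast_sub h2k.le]; ring
    rw [e2]
    have hII := gcII lam hlam n k h2k
    linear_combination (2 * (2 * x) ^ (n - 2 * k - 1)) * hII
  rw [Finset.sum_sub_distrib] at hdiff
  rw [hL, hR]
  rw [mul_add, Finset.mul_sum]
  unfold gD
  linear_combination hdiff + hf0

lemma gSum (lam : ℝ) (hlam : 0 < lam) (n : ℕ) (x : ℝ) :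
    gD lam (n + 1) x + gD lam n x =
      2 * ∑ k ∈ Finset.range (n + 1), ((k : ℝ) + lam) * Gegenbauer lam k x := by
  induction n with
  | zero =>
    unfold gD Gegenbauer
    norm_num
    unfold gc
    norm_num
    rw [show (1 : ℝ) + lam = lam + 1 from by ring, Real.Gamma_add_one hlam.ne']
    field_simp
  | succ n ih =>
    rw [show n + 1 + 1 = n + 2 from rfl, gB lam hlam n x, Finset.sum_range_succ]
    push_cast
    linear_combination ih


/-- `d/dx{(1+x) C_n^λ(x)} = (n+1) C_n^λ(x) + 2 Σ_{k=0}^{n−1} (k+λ) C_k^λ(x)`. -/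
theorem stmt6 (lam : ℝ) (hlam : 0 < lam) (n : ℕ) (x : ℝ) (hx : x ∈ Set.Icc (-1 : ℝ) 1) :
    deriv (fun y : ℝ => (1 + y) * Gegenbauer lam n y) x =
      ((n : ℝ) + 1) * Gegenbauer lam n x +
        2 * ∑ k ∈ Finset.range n, ((k : ℝ) + lam) * Gegenbauer lam k x := by
  have hC := hasDerivAt_Geg lam n x
  have hprod : HasDerivAt (fun y : ℝ => (1 + y) * Gegenbauer lam n y)
      (1 * Gegenbauer lam n x + (1 + x) * gD lam n x) x :=
    ((hasDerivAt_id x).const_add 1).mul hC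
  rw [hprod.deriv]
  cases n with
  | zero =>
    have h0 : gD lam 0 x = 0 := by unfold gD; simp
    rw [h0]
    simp
  | succ n =>
    have hA := gA lam hlam n x
    have hS := gSum lam hlam n x
    push_cast
    linear_combination hA + hS
end

section
/- For every λ > 0, n ∈ ℕ₀ and x ∈ [−1,1], d/dx{(1−x) C_n^λ(x)} = −(n+1) C_n^λ(x) + 2 Σ_{k=0}^{n−1} (−1)^{k+n+1} (k+λ) C_k^λ(x). -/
open Real MeasureTheory Finset intervalIntegral

noncomputable section Aux

/-- The `k`-th coefficient of the Gegenbauer polynomial. -/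
def gegC (lam : ℝ) (n k : ℕ) : ℝ :=
  (-1 : ℝ) ^ k * Real.Gamma ((n : ℝ) - (k : ℝ) + lam) /
    (Real.Gamma lam * (Nat.factorial k : ℝ) * (Nat.factorial (n - 2 * k) : ℝ))

/-- The derivative of the Gegenbauer polynomial, as an explicit sum. -/
def Dgeg (lam : ℝ) (n : ℕ) (x : ℝ) : ℝ :=
  ∑ k ∈ Finset.range (n / 2 + 1),
    gegC lam n k * (((n - 2 * k : ℕ) : ℝ) * (2 * x) ^ (n - 2 * k - 1) * 2)

lemma geg_eq (lam : ℝ) (n : ℕ) (x : ℝ) :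
    Gegenbauer lam n x = ∑ k ∈ Finset.range (n / 2 + 1), gegC lam n k * (2 * x) ^ (n - 2 * k) :=
  rfl

lemma hasDerivAt_geg (lam : ℝ) (n : ℕ) (x : ℝ) :
    HasDerivAt (fun y => Gegenbauer lam n y) (Dgeg lam n x) x := by
  have hfun : (fun y => Gegenbauer lam n y)
      = fun y => ∑ k ∈ Finset.range (n / 2 + 1), gegC lam n k * (2 * y) ^ (n - 2 * k) := rfl
  rw [hfun]
  unfold Dgeg
  apply HasDerivAt.fun_sum
  intro k _
  have h2 : HasDerivAt (fun y : ℝ => 2 * y) 2 x := by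
    simpa using (hasDerivAt_id x).const_mul 2
  have h3 : HasDerivAt (fun y : ℝ => (2 * y) ^ (n - 2 * k))
      (((n - 2 * k : ℕ) : ℝ) * (2 * x) ^ (n - 2 * k - 1) * 2) x := by
    simpa [mul_assoc, Function.comp_def] using (hasDerivAt_pow (n - 2 * k) (2 * x)).comp x h2
  exact h3.const_mul _

lemma gegC_ratio_A (lam : ℝ) (hlam : 0 < lam) (n k : ℕ) (hk : 2 * k ≤ n) :
    ((n + 1 - 2 * k : ℕ) : ℝ) * gegC lam (n + 1) k = ((n : ℝ) - k + lam) * gegC lam n k := by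
  have hΓ : Real.Gamma lam ≠ 0 := (Real.Gamma_pos_of_pos hlam).ne'
  have hpos : (0 : ℝ) < (n : ℝ) - k + lam := by
    have : (k : ℝ) ≤ n := by exact_mod_cast Nat.le_of_lt_succ (by omega)
    linarith
  have h1 : n + 1 - 2 * k = (n - 2 * k) + 1 := by omega
  have hg : Real.Gamma (((n + 1 : ℕ) : ℝ) - (k : ℝ) + lam)
      = ((n : ℝ) - k + lam) * Real.Gamma ((n : ℝ) - (k : ℝ) + lam) := by
    have e : ((n + 1 : ℕ) : ℝ) - (k : ℝ) + lam = ((n : ℝ) - (k : ℝ) + lam) + 1 := by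
      push_cast; ring
    rw [e, Real.Gamma_add_one hpos.ne']
  have hf1 : ((Nat.factorial k : ℕ) : ℝ) ≠ 0 := Nat.cast_ne_zero.mpr (Nat.factorial_ne_zero k)
  have hf2 : ((Nat.factorial (n - 2 * k) : ℕ) : ℝ) ≠ 0 :=
    Nat.cast_ne_zero.mpr (Nat.factorial_ne_zero _)
  unfold gegC
  rw [h1, hg, Nat.factorial_succ]
  push_cast
  have hd : ((n : ℝ) - 2 * (k : ℝ)) + 1 ≠ 0 := by
    have : (2 * k : ℝ) ≤ n := by exact_mod_cast hk
    linarith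
  field_simp

lemma gegC_ratio_B (lam : ℝ) (hlam : 0 < lam) (n k : ℕ) (hk : 2 * k + 1 ≤ n) :
    ((k : ℝ) + 1) * gegC lam (n + 1) (k + 1) = -(((n - 2 * k : ℕ) : ℝ) * gegC lam n k) := by
  have h1 : n + 1 - 2 * (k + 1) = n - 2 * k - 1 := by omega
  have h2 : n - 2 * k = (n - 2 * k - 1) + 1 := by omega
  have hg : ((n + 1 : ℕ) : ℝ) - ((k + 1 : ℕ) : ℝ) + lam = (n : ℝ) - (k : ℝ) + lam := by
    push_cast; ring
  unfold gegC
  rw [h1, hg, h2, Nat.factorial_succ, Nat.factorial_succ]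
  have hG : Real.Gamma lam ≠ 0 := (Real.Gamma_pos_of_pos hlam).ne'
  have hf1 : ((Nat.factorial k : ℕ) : ℝ) ≠ 0 := Nat.cast_ne_zero.mpr (Nat.factorial_ne_zero k)
  have hf2 : ((Nat.factorial (n - 2 * k - 1) : ℕ) : ℝ) ≠ 0 :=
    Nat.cast_ne_zero.mpr (Nat.factorial_ne_zero _)
  push_cast
  have hk1 : ((k : ℝ) + 1) ≠ 0 := by positivity
  have hm1 : ((n - 2 * k - 1 : ℕ) : ℝ) + 1 ≠ 0 := by positivity
  field_simp
  ring

lemma xpow_aux (x : ℝ) (m : ℕ) : (m : ℝ) * ((2 * x) ^ (m - 1) * 2 * x) = (m : ℝ) * (2 * x) ^ m := by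
  cases m with
  | zero => simp
  | succ m => simp only [Nat.add_sub_cancel, pow_succ]; ring

lemma lemA (lam : ℝ) (hlam : 0 < lam) (n : ℕ) (x : ℝ) :
    Dgeg lam (n + 1) x = ((n : ℝ) + 2 * lam) * Gegenbauer lam n x + x * Dgeg lam n x := by
  have hterm : ∀ k : ℕ, 2 * k ≤ n →
      gegC lam (n + 1) k * (((n + 1 - 2 * k : ℕ) : ℝ) * (2 * x) ^ (n + 1 - 2 * k - 1) * 2)
        = ((n : ℝ) + 2 * lam) * (gegC lam n k * (2 * x) ^ (n - 2 * k))
          + x * (gegC lam n k * (((n - 2 * k : ℕ) : ℝ) * (2 * x) ^ (n - 2 * k - 1) * 2)) := by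
    intro k hk
    have e1 := gegC_ratio_A lam hlam n k hk
    have e2 : ((n - 2 * k : ℕ) : ℝ) = (n : ℝ) - 2 * k := by
      rw [Nat.cast_sub hk]; push_cast; ring
    have e3 : n + 1 - 2 * k - 1 = n - 2 * k := by omega
    have e4 := xpow_aux x (n - 2 * k)
    rw [e3]
    linear_combination ((2 * x) ^ (n - 2 * k) * 2) * e1
      - gegC lam n k * e4 - (gegC lam n k * (2 * x) ^ (n - 2 * k)) * e2
  unfold Dgeg
  rw [geg_eq, Finset.mul_sum, Finset.mul_sum, ← Finset.sum_add_distrib]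
  rcases Nat.even_or_odd n with ⟨m, hm⟩ | ⟨m, hm⟩
  · subst hm
    have d1 : (m + m + 1) / 2 = m := by omega
    have d2 : (m + m) / 2 = m := by omega
    rw [d1, d2]
    exact Finset.sum_congr rfl fun k hk => hterm k (by simp at hk; omega)
  · subst hm
    have d1 : (2 * m + 1 + 1) / 2 = m + 1 := by omega
    have d2 : (2 * m + 1) / 2 = m := by omega
    rw [d1, d2, Finset.sum_range_succ]
    have hz : (2 * m + 1 + 1 - 2 * (m + 1) : ℕ) = 0 := by omega
    rw [hz]
    simp only [Nat.cast_zero, zero_mul, mul_zero, zero_mul, add_zero]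
    exact Finset.sum_congr rfl fun k hk => hterm k (by simp at hk; omega)

lemma lemB (lam : ℝ) (hlam : 0 < lam) (n : ℕ) (x : ℝ) :
    x * Dgeg lam (n + 1) x - ((n : ℝ) + 1) * Gegenbauer lam (n + 1) x = Dgeg lam n x := by
  have step1 : x * Dgeg lam (n + 1) x - ((n : ℝ) + 1) * Gegenbauer lam (n + 1) x
      = ∑ k ∈ Finset.range ((n + 1) / 2 + 1),
          (-(2 * (k : ℝ))) * gegC lam (n + 1) k * (2 * x) ^ (n + 1 - 2 * k) := by
    unfold Dgeg
    rw [geg_eq, Finset.mul_sum, Finset.mul_sum, ← Finset.sum_sub_distrib]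
    apply Finset.sum_congr rfl
    intro k hk
    have hk' : 2 * k ≤ n + 1 := by simp at hk; omega
    have e2 : ((n + 1 - 2 * k : ℕ) : ℝ) = ((n : ℝ) + 1) - 2 * k := by
      rw [Nat.cast_sub hk']; push_cast; ring
    have e4 := xpow_aux x (n + 1 - 2 * k)
    linear_combination gegC lam (n + 1) k * e4
      + gegC lam (n + 1) k * (2 * x) ^ (n + 1 - 2 * k) * e2
  rw [step1, Finset.sum_range_succ']
  simp only [Nat.cast_zero, mul_zero, neg_zero, zero_mul, add_zero]
  have hterm : ∀ k : ℕ, 2 * k + 1 ≤ n →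
      (-(2 * ((k : ℝ) + 1))) * gegC lam (n + 1) (k + 1) * (2 * x) ^ (n + 1 - 2 * (k + 1))
        = gegC lam n k * (((n - 2 * k : ℕ) : ℝ) * (2 * x) ^ (n - 2 * k - 1) * 2) := by
    intro k hk
    have e1 := gegC_ratio_B lam hlam n k hk
    have e3 : n + 1 - 2 * (k + 1) = n - 2 * k - 1 := by omega
    rw [e3]
    linear_combination (-(2 * (2 * x) ^ (n - 2 * k - 1))) * e1
  unfold Dgeg
  rcases Nat.even_or_odd n with ⟨m, hm⟩ | ⟨m, hm⟩
  · subst hm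
    have d1 : (m + m + 1) / 2 = m := by omega
    have d2 : (m + m) / 2 = m := by omega
    rw [d1, d2, Finset.sum_range_succ]
    have hz : (m + m - 2 * m : ℕ) = 0 := by omega
    rw [hz]
    simp only [Nat.cast_zero, zero_mul, mul_zero, add_zero]
    apply Finset.sum_congr rfl
    intro k hk
    have hk' : 2 * k + 1 ≤ m + m := by simp at hk; omega
    have := hterm k hk'
    push_cast at this ⊢
    linarith [this]
  · subst hm
    have d1 : (2 * m + 1 + 1) / 2 = m + 1 := by omega
    have d2 : (2 * m + 1) / 2 = m := by omega
    rw [d1, d2]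
    apply Finset.sum_congr rfl
    intro k hk
    have hk' : 2 * k + 1 ≤ 2 * m + 1 := by simp at hk; omega
    have := hterm k hk'
    push_cast at this ⊢
    linarith [this]

lemma geg_zero (lam : ℝ) (hlam : 0 < lam) (x : ℝ) : Gegenbauer lam 0 x = 1 := by
  have h : Real.Gamma lam ≠ 0 := (Real.Gamma_pos_of_pos hlam).ne'
  simp [Gegenbauer, Nat.factorial, div_eq_one_iff_eq h]

lemma Dgeg_zero (lam : ℝ) (x : ℝ) : Dgeg lam 0 x = 0 := by
  simp [Dgeg]

lemma key (lam : ℝ) (hlam : 0 < lam) : ∀ (n : ℕ) (x : ℝ),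
    -(Gegenbauer lam n x) + (1 - x) * Dgeg lam n x =
      -((n : ℝ) + 1) * Gegenbauer lam n x +
        2 * ∑ k ∈ Finset.range n, (-1 : ℝ) ^ (k + n + 1) * ((k : ℝ) + lam) * Gegenbauer lam k x := by
  intro n
  induction n with
  | zero => intro x; simp [geg_zero lam hlam x, Dgeg_zero]
  | succ n ih =>
    intro x
    have hA := lemA lam hlam n x
    have hB := lemB lam hlam n x
    have hIH := ih x
    rw [Finset.sum_range_succ]
    have hsum : ∑ k ∈ Finset.range n, (-1 : ℝ) ^ (k + (n + 1) + 1) * ((k : ℝ) + lam) * Gegenbauer lam k x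
        = -∑ k ∈ Finset.range n, (-1 : ℝ) ^ (k + n + 1) * ((k : ℝ) + lam) * Gegenbauer lam k x := by
      rw [← Finset.sum_neg_distrib]
      apply Finset.sum_congr rfl
      intro k _
      rw [show k + (n + 1) + 1 = (k + n + 1) + 1 by ring, pow_succ]
      ring
    rw [hsum]
    have h0 : (-1 : ℝ) ^ (n + (n + 1) + 1) = 1 := by
      rw [show n + (n + 1) + 1 = 2 * (n + 1) by ring, pow_mul]
      norm_num
    rw [h0]
    push_cast
    linear_combination hA - hB - hIH

end Aux

/-- `d/dx{(1−x) C_n^λ(x)} = −(n+1) C_n^λ(x) + 2 Σ_{k=0}^{n−1} (−1)^{k+n+1}(k+λ) C_k^λ(x)`. -/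
theorem stmt7 (lam : ℝ) (hlam : 0 < lam) (n : ℕ) (x : ℝ) (hx : x ∈ Set.Icc (-1 : ℝ) 1) :
    deriv (fun y : ℝ => (1 - y) * Gegenbauer lam n y) x =
      -((n : ℝ) + 1) * Gegenbauer lam n x +
        2 * ∑ k ∈ Finset.range n, (-1 : ℝ) ^ (k + n + 1) * ((k : ℝ) + lam) * Gegenbauer lam k x := by
  have h1 : HasDerivAt (fun y : ℝ => 1 - y) (-1) x := by
    simpa using (hasDerivAt_id x).const_sub 1
  have h := h1.fun_mul (hasDerivAt_geg lam n x)
  rw [h.deriv]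
  linear_combination key lam hlam n x
end

section
/- For every λ > 1, n ∈ ℕ and x ∈ [−1,1], (n+2λ−1) C_{n+1}^{λ−1}(x) − (n+2) C_{n+2}^{λ−1}(x) = (2λ−2)(1−x)[C_{n+1}^λ(x) + C_n^λ(x)]. -/
open Real MeasureTheory Finset intervalIntegral

lemma gamma_lam (lam : ℝ) (hlam : 1 < lam) :
    Real.Gamma lam = (lam - 1) * Real.Gamma (lam - 1) := by
  have := Real.Gamma_add_one (by linarith : lam - 1 ≠ 0)
  rw [show lam - 1 + 1 = lam by ring] at this
  exact this

-- term-wise identity for relation (I), valid for 2k ≤ n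
lemma termI (lam : ℝ) (hlam : 1 < lam) (n k : ℕ) (hk : 2 * k ≤ n) (x : ℝ) :
    ((n : ℝ) + 2 * lam - 1) *
      (((-1 : ℝ) ^ k * Real.Gamma (((n+1 : ℕ) : ℝ) - (k : ℝ) + (lam - 1)) /
        (Real.Gamma (lam - 1) * (Nat.factorial k : ℝ) * (Nat.factorial (n + 1 - 2 * k) : ℝ))) *
        (2 * x) ^ (n + 1 - 2 * k)) =
    (2 * lam - 2) *
      ((((-1 : ℝ) ^ k * Real.Gamma (((n+1 : ℕ) : ℝ) - (k : ℝ) + lam) /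
        (Real.Gamma lam * (Nat.factorial k : ℝ) * (Nat.factorial (n + 1 - 2 * k) : ℝ))) *
        (2 * x) ^ (n + 1 - 2 * k))
      - x * (((-1 : ℝ) ^ k * Real.Gamma ((n : ℝ) - (k : ℝ) + lam) /
        (Real.Gamma lam * (Nat.factorial k : ℝ) * (Nat.factorial (n - 2 * k) : ℝ))) *
        (2 * x) ^ (n - 2 * k))) := by
  have hm : n + 1 - 2 * k = (n - 2 * k) + 1 := by omega
  have hc : ((n - 2 * k : ℕ) : ℝ) = (n : ℝ) - 2 * k := by
    push_cast [Nat.cast_sub (by omega : 2 * k ≤ n)]; ring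
  have hlam0 : lam - 1 ≠ 0 := by linarith
  have hG1 := gamma_lam lam hlam
  have harg : (0:ℝ) < (n : ℝ) - (k : ℝ) + lam := by
    have : (k : ℝ) ≤ (n : ℝ) := by exact_mod_cast (by omega : k ≤ n)
    linarith
  have hG2 : Real.Gamma (((n+1 : ℕ) : ℝ) - (k : ℝ) + lam)
      = ((n : ℝ) - (k : ℝ) + lam) * Real.Gamma ((n : ℝ) - (k : ℝ) + lam) := by
    rw [show ((n+1 : ℕ) : ℝ) - (k : ℝ) + lam = ((n : ℝ) - (k : ℝ) + lam) + 1 by push_cast; ring,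
      Real.Gamma_add_one (ne_of_gt harg)]
  have hG3 : (((n+1 : ℕ) : ℝ) - (k : ℝ) + (lam - 1)) = (n : ℝ) - (k : ℝ) + lam := by
    push_cast; ring
  rw [hm, hG2, hG3, hG1]
  have hfac : (Nat.factorial ((n - 2*k) + 1) : ℝ) = ((n:ℝ) - 2*k + 1) * (Nat.factorial (n - 2*k) : ℝ) := by
    rw [Nat.factorial_succ]; push_cast [hc]; ring
  rw [hfac, pow_succ]
  have hg : Real.Gamma (lam - 1) ≠ 0 := ne_of_gt (Real.Gamma_pos_of_pos (by linarith))
  have hf1 : (Nat.factorial k : ℝ) ≠ 0 := by exact_mod_cast Nat.factorial_ne_zero k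
  have hf2 : (Nat.factorial (n - 2*k) : ℝ) ≠ 0 := by exact_mod_cast Nat.factorial_ne_zero _
  have hm1 : (n:ℝ) - 2*k + 1 ≠ 0 := by
    have h2 : ((2*k : ℕ) : ℝ) ≤ (n:ℝ) := by exact_mod_cast (by omega : 2*k ≤ n)
    push_cast at h2
    intro h; linarith
  field_simp
  ring

-- boundary term for relation (I), n odd, k = (n+1)/2
lemma bdryI (lam : ℝ) (hlam : 1 < lam) (n k : ℕ) (hk : 2 * k = n + 1) (x : ℝ) :
    ((n : ℝ) + 2 * lam - 1) *
      (((-1 : ℝ) ^ k * Real.Gamma (((n+1 : ℕ) : ℝ) - (k : ℝ) + (lam - 1)) /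
        (Real.Gamma (lam - 1) * (Nat.factorial k : ℝ) * (Nat.factorial (n + 1 - 2 * k) : ℝ))) *
        (2 * x) ^ (n + 1 - 2 * k)) =
    (2 * lam - 2) *
      (((-1 : ℝ) ^ k * Real.Gamma (((n+1 : ℕ) : ℝ) - (k : ℝ) + lam) /
        (Real.Gamma lam * (Nat.factorial k : ℝ) * (Nat.factorial (n + 1 - 2 * k) : ℝ))) *
        (2 * x) ^ (n + 1 - 2 * k)) := by
  simp only [Nat.cast_add, Nat.cast_one]
  have hlam0 : lam - 1 ≠ 0 := by linarith
  have hG1 := gamma_lam lam hlam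
  have hkc : (2 : ℝ) * (k : ℝ) = (n : ℝ) + 1 := by exact_mod_cast congrArg (Nat.cast : ℕ → ℝ) hk
  have harg : (0:ℝ) < (n : ℝ) + 1 - (k : ℝ) + (lam - 1) := by
    have : (k : ℝ) ≤ (n : ℝ) + 1 := by linarith
    linarith
  have hG2 : Real.Gamma ((n : ℝ) + 1 - (k : ℝ) + lam)
      = ((n : ℝ) + 1 - (k : ℝ) + (lam - 1)) * Real.Gamma ((n : ℝ) + 1 - (k : ℝ) + (lam-1)) := by
    rw [show (n : ℝ) + 1 - (k : ℝ) + lam = ((n : ℝ) + 1 - (k : ℝ) + (lam-1)) + 1 by ring,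
      Real.Gamma_add_one (ne_of_gt harg)]
  rw [hG2, hG1]
  have hg : Real.Gamma (lam - 1) ≠ 0 := ne_of_gt (Real.Gamma_pos_of_pos (by linarith))
  have hf1 : (Nat.factorial k : ℝ) ≠ 0 := by exact_mod_cast Nat.factorial_ne_zero k
  have hf2 : (Nat.factorial (n + 1 - 2*k) : ℝ) ≠ 0 := by exact_mod_cast Nat.factorial_ne_zero _
  field_simp
  linear_combination (2*x)^(n+1-2*k) * hkc

-- term-wise identity for relation (II): k = j+1, valid for 2j+1 ≤ n
lemma termII (lam : ℝ) (hlam : 1 < lam) (n j : ℕ) (hj : 2 * j + 1 ≤ n) (x : ℝ) :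
    ((n : ℝ) + 2) *
      (((-1 : ℝ) ^ (j+1) * Real.Gamma (((n+2 : ℕ) : ℝ) - ((j+1 : ℕ) : ℝ) + (lam - 1)) /
        (Real.Gamma (lam - 1) * (Nat.factorial (j+1) : ℝ) * (Nat.factorial (n + 2 - 2 * (j+1)) : ℝ))) *
        (2 * x) ^ (n + 2 - 2 * (j+1))) =
    (2 * lam - 2) *
      (x * (((-1 : ℝ) ^ (j+1) * Real.Gamma (((n+1 : ℕ) : ℝ) - ((j+1 : ℕ) : ℝ) + lam) /
        (Real.Gamma lam * (Nat.factorial (j+1) : ℝ) * (Nat.factorial (n + 1 - 2 * (j+1)) : ℝ))) *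
        (2 * x) ^ (n + 1 - 2 * (j+1)))
      - (((-1 : ℝ) ^ j * Real.Gamma ((n : ℝ) - (j : ℝ) + lam) /
        (Real.Gamma lam * (Nat.factorial j : ℝ) * (Nat.factorial (n - 2 * j) : ℝ))) *
        (2 * x) ^ (n - 2 * j))) := by
  obtain ⟨m, rfl⟩ : ∃ m, n = 2*j + 1 + m := ⟨n - (2*j+1), by omega⟩
  have e1 : 2*j+1+m + 2 - 2 * (j+1) = m + 1 := by omega
  have e2 : 2*j+1+m + 1 - 2 * (j+1) = m := by omega
  have e3 : 2*j+1+m - 2 * j = m + 1 := by omega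
  rw [e1, e2, e3]
  have hlam0 : lam - 1 ≠ 0 := by linarith
  have hG1 := gamma_lam lam hlam
  have hA : (((2*j+1+m)+2 : ℕ) : ℝ) - ((j+1 : ℕ) : ℝ) + (lam - 1)
      = ((2*j+1+m : ℕ) : ℝ) - (j : ℝ) + lam := by push_cast; ring
  have hB : (((2*j+1+m)+1 : ℕ) : ℝ) - ((j+1 : ℕ) : ℝ) + lam
      = ((2*j+1+m : ℕ) : ℝ) - (j : ℝ) + lam := by push_cast; ring
  rw [hA, hB, hG1]
  have hfacA : (Nat.factorial (m + 1) : ℝ) = ((m:ℝ) + 1) * (Nat.factorial m : ℝ) := by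
    rw [Nat.factorial_succ]; push_cast; ring
  have hfack : (Nat.factorial (j+1) : ℝ) = ((j:ℝ) + 1) * (Nat.factorial j : ℝ) := by
    rw [Nat.factorial_succ]; push_cast; ring
  rw [hfacA, hfack, pow_succ, pow_succ]
  have hg : Real.Gamma (lam - 1) ≠ 0 := ne_of_gt (Real.Gamma_pos_of_pos (by linarith))
  have hf1 : (Nat.factorial j : ℝ) ≠ 0 := by exact_mod_cast Nat.factorial_ne_zero j
  have hf2 : (Nat.factorial m : ℝ) ≠ 0 := by exact_mod_cast Nat.factorial_ne_zero _
  have hj1 : ((j:ℝ) + 1) ≠ 0 := by positivity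
  have hm : ((m:ℝ) + 1) ≠ 0 := by positivity
  push_cast
  field_simp
  ring

-- boundary for (II) at k = 0
lemma bdryII0 (lam : ℝ) (hlam : 1 < lam) (n : ℕ) (x : ℝ) :
    ((n : ℝ) + 2) *
      (((-1 : ℝ) ^ (0:ℕ) * Real.Gamma (((n+2 : ℕ) : ℝ) - ((0:ℕ) : ℝ) + (lam - 1)) /
        (Real.Gamma (lam - 1) * (Nat.factorial 0 : ℝ) * (Nat.factorial (n + 2 - 2 * 0) : ℝ))) *
        (2 * x) ^ (n + 2 - 2 * 0)) =
    (2 * lam - 2) *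
      (x * (((-1 : ℝ) ^ (0:ℕ) * Real.Gamma (((n+1 : ℕ) : ℝ) - ((0:ℕ) : ℝ) + lam) /
        (Real.Gamma lam * (Nat.factorial 0 : ℝ) * (Nat.factorial (n + 1 - 2 * 0) : ℝ))) *
        (2 * x) ^ (n + 1 - 2 * 0))) := by
  simp only [Nat.cast_add, Nat.cast_one, Nat.cast_ofNat, Nat.cast_zero, pow_zero,
    Nat.factorial_zero, Nat.mul_zero, Nat.sub_zero]
  have hlam0 : lam - 1 ≠ 0 := by linarith
  have hG1 := gamma_lam lam hlam
  have hA : (n : ℝ) + 2 - 0 + (lam - 1) = (n : ℝ) + 1 - 0 + lam := by ring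
  rw [hA, hG1]
  have e1 : n + 2 = (n + 1) + 1 := by omega
  rw [e1]
  have hfacA : (Nat.factorial ((n+1) + 1) : ℝ) = ((n:ℝ) + 2) * (Nat.factorial (n+1) : ℝ) := by
    rw [Nat.factorial_succ]; push_cast; ring
  rw [hfacA, pow_succ]
  have hg : Real.Gamma (lam - 1) ≠ 0 := ne_of_gt (Real.Gamma_pos_of_pos (by linarith))
  have hf1 : (Nat.factorial (n+1) : ℝ) ≠ 0 := by exact_mod_cast Nat.factorial_ne_zero _
  have hn2 : ((n:ℝ) + 2) ≠ 0 := by positivity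
  field_simp

-- boundary for (II): n = 2j even, k = j+1: A2 (j+1) = - C2 j
lemma bdryII1 (lam : ℝ) (hlam : 1 < lam) (n j : ℕ) (hj : 2 * j = n) (x : ℝ) :
    ((n : ℝ) + 2) *
      (((-1 : ℝ) ^ (j+1) * Real.Gamma (((n+2 : ℕ) : ℝ) - ((j+1 : ℕ) : ℝ) + (lam - 1)) /
        (Real.Gamma (lam - 1) * (Nat.factorial (j+1) : ℝ) * (Nat.factorial (n + 2 - 2 * (j+1)) : ℝ))) *
        (2 * x) ^ (n + 2 - 2 * (j+1))) =
    - ((2 * lam - 2) *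
      (((-1 : ℝ) ^ j * Real.Gamma ((n : ℝ) - (j : ℝ) + lam) /
        (Real.Gamma lam * (Nat.factorial j : ℝ) * (Nat.factorial (n - 2 * j) : ℝ))) *
        (2 * x) ^ (n - 2 * j))) := by
  simp only [Nat.cast_add, Nat.cast_one, Nat.cast_ofNat]
  have hlam0 : lam - 1 ≠ 0 := by linarith
  have hG1 := gamma_lam lam hlam
  have hA : (n : ℝ) + 2 - ((j:ℝ) + 1) + (lam - 1) = (n : ℝ) - j + lam := by ring
  rw [hA, hG1]
  have e1 : n + 2 - 2 * (j+1) = 0 := by omega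
  have e2 : n - 2 * j = 0 := by omega
  rw [e1, e2]
  have hfack : (Nat.factorial (j+1) : ℝ) = ((j:ℝ) + 1) * (Nat.factorial j : ℝ) := by
    rw [Nat.factorial_succ]; push_cast; ring
  rw [hfack]
  have hg : Real.Gamma (lam - 1) ≠ 0 := ne_of_gt (Real.Gamma_pos_of_pos (by linarith))
  have hf1 : (Nat.factorial j : ℝ) ≠ 0 := by exact_mod_cast Nat.factorial_ne_zero j
  have hj1 : ((j:ℝ) + 1) ≠ 0 := by positivity
  have hn : (n : ℝ) = 2 * j := by exact_mod_cast hj.symm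
  field_simp
  linear_combination (-((-1:ℝ))^j * Real.Gamma ((n:ℝ) - j + lam)) * hn

lemma gegI (lam : ℝ) (hlam : 1 < lam) (n : ℕ) (x : ℝ) :
    ((n : ℝ) + 2 * lam - 1) * Gegenbauer (lam - 1) (n + 1) x =
      (2 * lam - 2) * (Gegenbauer lam (n + 1) x - x * Gegenbauer lam n x) := by
  simp only [Gegenbauer, mul_sub, Finset.mul_sum]
  rcases Nat.even_or_odd n with he | ho
  · rw [Nat.even_iff] at he
    have hr : (n + 1) / 2 + 1 = n / 2 + 1 := by omega
    rw [hr, ← Finset.sum_sub_distrib]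
    refine Finset.sum_congr rfl fun k hk => ?_
    simp only [Finset.mem_range] at hk
    have h2k : 2 * k ≤ n := by omega
    linear_combination termI lam hlam n k h2k x
  · rw [Nat.odd_iff] at ho
    have hr : (n + 1) / 2 + 1 = (n / 2 + 1) + 1 := by omega
    rw [hr, Finset.sum_range_succ _ (n / 2 + 1), Finset.sum_range_succ _ (n / 2 + 1)]
    have h2K : 2 * (n / 2 + 1) = n + 1 := by omega
    have hbd := bdryI lam hlam n (n / 2 + 1) h2K x
    have h1 : ∑ k ∈ Finset.range (n / 2 + 1),
        ((n : ℝ) + 2 * lam - 1) *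
          (((-1 : ℝ) ^ k * Real.Gamma (((n+1 : ℕ) : ℝ) - (k : ℝ) + (lam - 1)) /
            (Real.Gamma (lam - 1) * (Nat.factorial k : ℝ) * (Nat.factorial (n + 1 - 2 * k) : ℝ))) *
            (2 * x) ^ (n + 1 - 2 * k)) =
        (∑ k ∈ Finset.range (n / 2 + 1),
          (2 * lam - 2) *
            (((-1 : ℝ) ^ k * Real.Gamma (((n+1 : ℕ) : ℝ) - (k : ℝ) + lam) /
            (Real.Gamma lam * (Nat.factorial k : ℝ) * (Nat.factorial (n + 1 - 2 * k) : ℝ))) *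
            (2 * x) ^ (n + 1 - 2 * k))) -
        ∑ k ∈ Finset.range (n / 2 + 1),
          (2 * lam - 2) *
            (x * (((-1 : ℝ) ^ k * Real.Gamma ((n : ℝ) - (k : ℝ) + lam) /
            (Real.Gamma lam * (Nat.factorial k : ℝ) * (Nat.factorial (n - 2 * k) : ℝ))) *
            (2 * x) ^ (n - 2 * k))) := by
      rw [← Finset.sum_sub_distrib]
      refine Finset.sum_congr rfl fun k hk => ?_
      simp only [Finset.mem_range] at hk
      have h2k : 2 * k ≤ n := by omega
      linear_combination termI lam hlam n k h2k x
    linarith [h1, hbd]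

lemma gegII (lam : ℝ) (hlam : 1 < lam) (n : ℕ) (x : ℝ) :
    ((n : ℝ) + 2) * Gegenbauer (lam - 1) (n + 2) x =
      (2 * lam - 2) * (x * Gegenbauer lam (n + 1) x - Gegenbauer lam n x) := by
  simp only [Gegenbauer, mul_sub, Finset.mul_sum]
  rw [show (n + 2) / 2 + 1 = (n / 2 + 1) + 1 by omega]
  have h0 := bdryII0 lam hlam n x
  rcases Nat.even_or_odd n with he | ho
  · -- n even
    rw [Nat.even_iff] at he
    rw [show (n + 1) / 2 + 1 = n / 2 + 1 by omega,
      Finset.sum_range_succ' _ (n / 2), Finset.sum_range_succ _ (n / 2),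
      Finset.sum_range_succ' _ (n / 2 + 1), Finset.sum_range_succ _ (n / 2)]
    have hbd := bdryII1 lam hlam n (n / 2) (by omega) x
    have h1 : ∑ j ∈ Finset.range (n / 2),
        ((n : ℝ) + 2) *
          (((-1 : ℝ) ^ (j+1) * Real.Gamma (((n+2 : ℕ) : ℝ) - ((j+1 : ℕ) : ℝ) + (lam - 1)) /
            (Real.Gamma (lam - 1) * (Nat.factorial (j+1) : ℝ) * (Nat.factorial (n + 2 - 2 * (j+1)) : ℝ))) *
            (2 * x) ^ (n + 2 - 2 * (j+1))) =
        (∑ j ∈ Finset.range (n / 2),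
          (2 * lam - 2) *
            (x * (((-1 : ℝ) ^ (j+1) * Real.Gamma (((n+1 : ℕ) : ℝ) - ((j+1 : ℕ) : ℝ) + lam) /
            (Real.Gamma lam * (Nat.factorial (j+1) : ℝ) * (Nat.factorial (n + 1 - 2 * (j+1)) : ℝ))) *
            (2 * x) ^ (n + 1 - 2 * (j+1))))) -
        ∑ j ∈ Finset.range (n / 2),
          (2 * lam - 2) *
            (((-1 : ℝ) ^ j * Real.Gamma ((n : ℝ) - (j : ℝ) + lam) /
            (Real.Gamma lam * (Nat.factorial j : ℝ) * (Nat.factorial (n - 2 * j) : ℝ))) *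
            (2 * x) ^ (n - 2 * j)) := by
      rw [← Finset.sum_sub_distrib]
      refine Finset.sum_congr rfl fun j hj => ?_
      simp only [Finset.mem_range] at hj
      have h2j : 2 * j + 1 ≤ n := by omega
      linear_combination termII lam hlam n j h2j x
    linarith [h0, h1, hbd]
  · -- n odd
    rw [Nat.odd_iff] at ho
    rw [show (n + 1) / 2 + 1 = (n / 2 + 1) + 1 by omega,
      Finset.sum_range_succ' _ (n / 2 + 1), Finset.sum_range_succ' _ (n / 2 + 1)]
    have h1 : ∑ j ∈ Finset.range (n / 2 + 1),
        ((n : ℝ) + 2) *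
          (((-1 : ℝ) ^ (j+1) * Real.Gamma (((n+2 : ℕ) : ℝ) - ((j+1 : ℕ) : ℝ) + (lam - 1)) /
            (Real.Gamma (lam - 1) * (Nat.factorial (j+1) : ℝ) * (Nat.factorial (n + 2 - 2 * (j+1)) : ℝ))) *
            (2 * x) ^ (n + 2 - 2 * (j+1))) =
        (∑ j ∈ Finset.range (n / 2 + 1),
          (2 * lam - 2) *
            (x * (((-1 : ℝ) ^ (j+1) * Real.Gamma (((n+1 : ℕ) : ℝ) - ((j+1 : ℕ) : ℝ) + lam) /
            (Real.Gamma lam * (Nat.factorial (j+1) : ℝ) * (Nat.factorial (n + 1 - 2 * (j+1)) : ℝ))) *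
            (2 * x) ^ (n + 1 - 2 * (j+1))))) -
        ∑ j ∈ Finset.range (n / 2 + 1),
          (2 * lam - 2) *
            (((-1 : ℝ) ^ j * Real.Gamma ((n : ℝ) - (j : ℝ) + lam) /
            (Real.Gamma lam * (Nat.factorial j : ℝ) * (Nat.factorial (n - 2 * j) : ℝ))) *
            (2 * x) ^ (n - 2 * j)) := by
      rw [← Finset.sum_sub_distrib]
      refine Finset.sum_congr rfl fun j hj => ?_
      simp only [Finset.mem_range] at hj
      have h2j : 2 * j + 1 ≤ n := by omega
      linear_combination termII lam hlam n j h2j x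
    linarith [h0, h1]


/-- `(n+2λ−1) C_{n+1}^{λ−1} − (n+2) C_{n+2}^{λ−1} = (2λ−2)(1−x)[C_{n+1}^λ + C_n^λ]`. -/
theorem stmt9 (lam : ℝ) (hlam : 1 < lam) (n : ℕ) (hn : 1 ≤ n) (x : ℝ)
    (hx : x ∈ Set.Icc (-1 : ℝ) 1) :
    ((n : ℝ) + 2 * lam - 1) * Gegenbauer (lam - 1) (n + 1) x -
        ((n : ℝ) + 2) * Gegenbauer (lam - 1) (n + 2) x =
      (2 * lam - 2) * (1 - x) * (Gegenbauer lam (n + 1) x + Gegenbauer lam n x) := by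
  linear_combination gegI lam hlam n x - gegII lam hlam n x
end

section
/- For every λ > 0, n ∈ ℕ₀ and x ∈ [−1,1], (1/Γ(λ)) ∫_x^1 (1−t)^λ (t−x)^{−1/2} C_n^{λ+1/2}(t) dt = (√π / (2 Γ(λ+1/2)(n+λ+1/2))) (1−x)^{λ−1/2} [(n+2λ) C_n^λ(x) − (n+1) C_{n+1}^λ(x)]. -/
open Real MeasureTheory Finset intervalIntegral

noncomputable section

set_option maxHeartbeats 1000000

/-- coefficient of the `(1-t)^k` expansion of `C_n^μ`. -/
def Dc (μ : ℝ) (n k : ℕ) : ℝ :=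
  (-1 : ℝ) ^ k * Real.Gamma ((n : ℝ) + 2 * μ + k) * Real.Gamma (μ + 1 / 2) /
    (Real.Gamma (2 * μ) * (Nat.factorial (n - k) : ℝ) * (Nat.factorial k : ℝ) * 2 ^ k *
      Real.Gamma (μ + 1 / 2 + k))

def GegAlt (μ : ℝ) (n : ℕ) (t : ℝ) : ℝ :=
  ∑ k ∈ Finset.range (n + 1), Dc μ n k * (1 - t) ^ k

/-- guarded Gegenbauer term -/
def gt' (μ : ℝ) (n : ℕ) (t : ℝ) (k : ℕ) : ℝ :=
  if 2 * k ≤ n then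
    ((-1 : ℝ) ^ k * Real.Gamma ((n : ℝ) - (k : ℝ) + μ) /
      (Real.Gamma μ * (Nat.factorial k : ℝ) * (Nat.factorial (n - 2 * k) : ℝ))) *
      (2 * t) ^ (n - 2 * k)
  else 0

def dt' (μ : ℝ) (n k : ℕ) (t : ℝ) : ℝ :=
  if k ≤ n then Dc μ n k * (1 - t) ^ k else 0

lemma geg_eq_sum_gt (μ : ℝ) (n : ℕ) (t : ℝ) {N : ℕ} (hN : n / 2 + 1 ≤ N) :
    Gegenbauer μ n t = ∑ k ∈ Finset.range N, gt' μ n t k := by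
  rw [Gegenbauer, ← Finset.sum_subset (Finset.range_subset_range.mpr hN) (fun k hk hk2 => ?_)]
  · refine Finset.sum_congr rfl fun k hk => ?_
    rw [Finset.mem_range] at hk
    rw [gt', if_pos (by omega)]
  · rw [Finset.mem_range] at hk hk2
    rw [gt', if_neg (by omega)]

lemma alt_eq_sum_dt (μ : ℝ) (n : ℕ) (t : ℝ) {N : ℕ} (hN : n + 1 ≤ N) :
    GegAlt μ n t = ∑ k ∈ Finset.range N, dt' μ n k t := by
  rw [GegAlt, ← Finset.sum_subset (Finset.range_subset_range.mpr hN) (fun k hk hk2 => ?_)]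
  · refine Finset.sum_congr rfl fun k hk => ?_
    rw [Finset.mem_range] at hk
    rw [dt', if_pos (by omega)]
  · rw [Finset.mem_range] at hk hk2
    rw [dt', if_neg (by omega)]

lemma Gamma_pos' {s : ℝ} (h : 0 < s) : Real.Gamma s ≠ 0 := (Real.Gamma_pos_of_pos h).ne'

lemma rec_geg (μ : ℝ) (hμ : 0 < μ) (n : ℕ) (t : ℝ) :
    ((n : ℝ) + 2) * Gegenbauer μ (n + 2) t =
      2 * ((n : ℝ) + 1 + μ) * t * Gegenbauer μ (n + 1) t -
        ((n : ℝ) + 2 * μ) * Gegenbauer μ n t := by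
  have hΓμ : Real.Gamma μ ≠ 0 := Gamma_pos' hμ
  rw [geg_eq_sum_gt μ (n + 2) t (show (n+2)/2+1 ≤ n/2+2 by omega),
      geg_eq_sum_gt μ (n + 1) t (show (n+1)/2+1 ≤ n/2+2 by omega),
      geg_eq_sum_gt μ n t (le_refl (n/2+1))]
  have hsum : ((n : ℝ) + 2 * μ) * ∑ k ∈ Finset.range (n/2+1), gt' μ n t k
      = ∑ k ∈ Finset.range (n/2+2),
          (fun k => match k with
            | 0 => (0:ℝ)
            | (j+1) => ((n : ℝ) + 2 * μ) * gt' μ n t j) k := by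
    conv_rhs => rw [Finset.sum_range_succ']
    rw [Finset.mul_sum]
    simp
  rw [Finset.mul_sum, hsum, Finset.mul_sum, ← Finset.sum_sub_distrib]
  refine Finset.sum_congr rfl fun k _ => ?_
  match k with
  | 0 =>
    simp only [gt']
    rw [if_pos (by omega : 2*0 ≤ n + 2), if_pos (by omega : 2*0 ≤ n + 1)]
    have e1 : ((n + 2 : ℕ) : ℝ) - ((0:ℕ) : ℝ) + μ = ((n:ℝ) + 1 + μ) + 1 := by push_cast; ring
    have e2 : ((n + 1 : ℕ) : ℝ) - ((0:ℕ) : ℝ) + μ = (n:ℝ) + 1 + μ := by push_cast; ring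
    rw [e1, e2, Real.Gamma_add_one (by positivity)]
    simp only [Nat.mul_zero, Nat.sub_zero, pow_zero, Nat.factorial_zero, Nat.cast_one]
    have e3 : (2*t)^(n+2) = (2*t)^(n+1) * (2*t) := by ring
    rw [e3]
    have hf : ((Nat.factorial (n+2) : ℝ)) = ((n:ℝ)+2) * (Nat.factorial (n+1)) := by
      rw [Nat.factorial_succ]; push_cast; ring
    rw [hf]
    have hf1 : (Nat.factorial (n+1) : ℝ) ≠ 0 := by positivity
    field_simp
    ring
  | (j+1) =>
    by_cases h1 : 2 * (j+1) ≤ n + 2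
    · -- i.e. 2j ≤ n
      have hj : 2 * j ≤ n := by omega
      by_cases h2 : 2 * (j+1) ≤ n + 1
      · -- main case : 2j+1 ≤ n, set n = 2j+1+m
        obtain ⟨m, rfl⟩ : ∃ m, n = 2*j+1+m := ⟨n - (2*j+1), by omega⟩
        simp only [gt']
        rw [if_pos h1, if_pos h2, if_pos hj]
        have c1 : 2*j+1+m+2 - 2*(j+1) = m+1 := by omega
        have c2 : 2*j+1+m+1 - 2*(j+1) = m := by omega
        have c3 : 2*j+1+m - 2*j = m+1 := by omega
        rw [c1, c2, c3]
        have e1 : ((2*j+1+m+2 : ℕ) : ℝ) - ((j+1:ℕ) : ℝ) + μ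
            = (((2*j+1+m : ℕ) : ℝ) - ((j:ℕ):ℝ) + μ) + 1 := by push_cast; ring
        have e2 : ((2*j+1+m+1 : ℕ) : ℝ) - ((j+1:ℕ) : ℝ) + μ
            = ((2*j+1+m : ℕ) : ℝ) - ((j:ℕ):ℝ) + μ := by push_cast; ring
        have hpos : (0:ℝ) < ((2*j+1+m : ℕ) : ℝ) - ((j:ℕ):ℝ) + μ := by
          push_cast
          have h0 : (0:ℝ) ≤ (j:ℝ) := by positivity
          have h1 : (0:ℝ) ≤ (m:ℝ) := by positivity
          linarith
        rw [e1, e2, Real.Gamma_add_one hpos.ne']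
        have e3 : (2*t)^(m+1) = (2*t)^m * (2*t) := by ring
        rw [e3]
        have hfm : ((Nat.factorial (m+1) : ℝ)) = ((m:ℝ)+1) * (Nat.factorial m) := by
          rw [Nat.factorial_succ]; push_cast; ring
        rw [hfm]
        have hf1 : (Nat.factorial m : ℝ) ≠ 0 := by positivity
        have hf2 : (Nat.factorial (j+1) : ℝ) ≠ 0 := by positivity
        have hf3 : (Nat.factorial j : ℝ) ≠ 0 := by positivity
        have hfj : ((Nat.factorial (j+1) : ℝ)) = ((j:ℝ)+1) * (Nat.factorial j) := by
          rw [Nat.factorial_succ]; push_cast; ring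
        rw [hfj]
        push_cast
        field_simp
        ring
      · -- 2(j+1) = n+2, i.e. n = 2j
        have hn : n = 2*j := by omega
        subst hn
        simp only [gt']
        rw [if_pos h1, if_neg h2, if_pos hj]
        have c1 : 2*j+2 - 2*(j+1) = 0 := by omega
        have c2 : 2*j - 2*j = 0 := by omega
        rw [c1, c2]
        have e1 : ((2*j+2 : ℕ) : ℝ) - ((j+1:ℕ) : ℝ) + μ
            = (((2*j : ℕ) : ℝ) - ((j:ℕ):ℝ) + μ) + 1 := by push_cast; ring
        have hpos : (0:ℝ) < ((2*j : ℕ) : ℝ) - ((j:ℕ):ℝ) + μ := by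
          push_cast
          have h0 : (0:ℝ) ≤ (j:ℝ) := by positivity
          linarith
        rw [e1, Real.Gamma_add_one hpos.ne']
        have hfj : ((Nat.factorial (j+1) : ℝ)) = ((j:ℝ)+1) * (Nat.factorial j) := by
          rw [Nat.factorial_succ]; push_cast; ring
        rw [hfj]
        have hf3 : (Nat.factorial j : ℝ) ≠ 0 := by positivity
        push_cast
        field_simp
        ring
    · -- all zero
      simp only [gt']
      rw [if_neg h1, if_neg (by omega), if_neg (by omega)]
      ring

lemma Gamma_succ' {s : ℝ} (h : 0 < s) : Real.Gamma (s + 1) = s * Real.Gamma s :=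
  Real.Gamma_add_one h.ne'

lemma rec_alt (μ : ℝ) (hμ : 0 < μ) (n : ℕ) (t : ℝ) :
    ((n : ℝ) + 2) * GegAlt μ (n + 2) t =
      2 * ((n : ℝ) + 1 + μ) * t * GegAlt μ (n + 1) t -
        ((n : ℝ) + 2 * μ) * GegAlt μ n t := by
  have h2μ : (0:ℝ) < 2 * μ := by linarith
  have hΓ2μ : Real.Gamma (2*μ) ≠ 0 := Gamma_pos' h2μ
  have hΓh : Real.Gamma (μ + 1/2) ≠ 0 := Gamma_pos' (by linarith)
  set S : ℕ → ℝ := fun k => match k with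
    | 0 => (0:ℝ)
    | (j+1) => 2*((n:ℝ)+1+μ) * (dt' μ (n+1) j t * (1-t)) with hSdef
  have hS : ∑ k ∈ Finset.range (n+3), S k
      = (2*((n:ℝ)+1+μ)*(1-t)) * ∑ k ∈ Finset.range (n+3), dt' μ (n+1) k t := by
    rw [Finset.sum_range_succ']
    have htop : ∑ k ∈ Finset.range (n+3), dt' μ (n+1) k t
        = ∑ k ∈ Finset.range (n+2), dt' μ (n+1) k t := by
      rw [Finset.sum_range_succ, dt', if_neg (by omega)]
      ring
    rw [htop, Finset.mul_sum]
    simp only [hSdef]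
    rw [add_zero]
    exact Finset.sum_congr rfl fun k _ => by ring
  rw [alt_eq_sum_dt μ (n + 2) t (le_refl (n+3)),
      alt_eq_sum_dt μ (n + 1) t (show n+2 ≤ n+3 by omega),
      alt_eq_sum_dt μ n t (show n+1 ≤ n+3 by omega)]
  have hB : 2*((n:ℝ)+1+μ)*t * ∑ k ∈ Finset.range (n+3), dt' μ (n+1) k t
      = ∑ k ∈ Finset.range (n+3), (2*((n:ℝ)+1+μ) * dt' μ (n+1) k t - S k) := by
    rw [Finset.sum_sub_distrib, hS, ← Finset.mul_sum]
    ring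
  rw [hB, Finset.mul_sum, Finset.mul_sum, ← Finset.sum_sub_distrib]
  refine Finset.sum_congr rfl fun k hk => ?_
  rw [Finset.mem_range] at hk
  match k with
  | 0 =>
    simp only [hSdef, dt']
    rw [if_pos (by omega), if_pos (by omega), if_pos (by omega)]
    simp only [Dc, pow_zero, Nat.sub_zero]
    have e2 : ((n+2:ℕ):ℝ) + 2*μ + ((0:ℕ):ℝ) = (((n:ℝ) + 2*μ) + 1) + 1 := by push_cast; ring
    have e1 : ((n+1:ℕ):ℝ) + 2*μ + ((0:ℕ):ℝ) = ((n:ℝ) + 2*μ) + 1 := by push_cast; ring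
    have e0 : ((n:ℕ):ℝ) + 2*μ + ((0:ℕ):ℝ) = (n:ℝ) + 2*μ := by push_cast; ring
    have e3 : μ + 1/2 + ((0:ℕ):ℝ) = μ + 1/2 := by push_cast; ring
    have hp0 : (0:ℝ) < (n:ℝ) + 2*μ := by positivity
    rw [e2, e1, e0, e3, Gamma_succ' (by linarith), Gamma_succ' hp0]
    simp only [Nat.factorial_zero]
    have hf2 : ((Nat.factorial (n+2) : ℝ)) = ((n:ℝ)+2)*((n:ℝ)+1) * (Nat.factorial n) := by
      rw [Nat.factorial_succ, Nat.factorial_succ]; push_cast; ring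
    have hf1 : ((Nat.factorial (n+1) : ℝ)) = ((n:ℝ)+1) * (Nat.factorial n) := by
      rw [Nat.factorial_succ]; push_cast; ring
    rw [hf2, hf1]
    have hfn : (Nat.factorial n : ℝ) ≠ 0 := by positivity
    field_simp
    ring
  | (j+1) =>
    have hμh : (0:ℝ) < μ + 1/2 + (j:ℝ) := by positivity
    have eμh : (μ + 1/2 + ((j+1:ℕ):ℝ)) = (μ + 1/2 + (j:ℝ)) + 1 := by push_cast; ring
    by_cases c0 : j + 1 ≤ n
    · obtain ⟨m, rfl⟩ : ∃ m, n = j + 1 + m := ⟨n - (j+1), by omega⟩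
      simp only [hSdef, dt']
      rw [if_pos (by omega), if_pos (by omega), if_pos (by omega), if_pos (by omega)]
      simp only [Dc]
      have c1 : j+1+m+2 - (j+1) = m+2 := by omega
      have c2 : j+1+m+1 - (j+1) = m+1 := by omega
      have c3 : j+1+m - (j+1) = m := by omega
      have c4 : j+1+m+1 - j = m+2 := by omega
      rw [c1, c2, c3, c4]
      set C : ℝ := 2*(j:ℝ) + (m:ℝ) + 2 + 2*μ with hC
      have hCpos : (0:ℝ) < C := by positivity
      have e2 : ((j+1+m+2:ℕ):ℝ) + 2*μ + ((j+1:ℕ):ℝ) = (C + 1) + 1 := by rw [hC]; push_cast; ring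
      have e1 : ((j+1+m+1:ℕ):ℝ) + 2*μ + ((j+1:ℕ):ℝ) = C + 1 := by rw [hC]; push_cast; ring
      have e0 : ((j+1+m:ℕ):ℝ) + 2*μ + ((j+1:ℕ):ℝ) = C := by rw [hC]; push_cast; ring
      have e0' : ((j+1+m+1:ℕ):ℝ) + 2*μ + ((j:ℕ):ℝ) = C := by rw [hC]; push_cast; ring
      rw [e2, e1, e0, e0', eμh, Gamma_succ' (by linarith), Gamma_succ' hCpos,
        Gamma_succ' hμh]
      have hfm2 : ((Nat.factorial (m+2) : ℝ)) = ((m:ℝ)+2)*((m:ℝ)+1) * (Nat.factorial m) := by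
        rw [Nat.factorial_succ, Nat.factorial_succ]; push_cast; ring
      have hfm1 : ((Nat.factorial (m+1) : ℝ)) = ((m:ℝ)+1) * (Nat.factorial m) := by
        rw [Nat.factorial_succ]; push_cast; ring
      have hfj : ((Nat.factorial (j+1) : ℝ)) = ((j:ℝ)+1) * (Nat.factorial j) := by
        rw [Nat.factorial_succ]; push_cast; ring
      rw [hfm2, hfm1, hfj]
      have hfm : (Nat.factorial m : ℝ) ≠ 0 := by positivity
      have hfjj : (Nat.factorial j : ℝ) ≠ 0 := by positivity
      have hΓC : Real.Gamma C ≠ 0 := Gamma_pos' hCpos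
      have hΓμh : Real.Gamma (μ+1/2+(j:ℝ)) ≠ 0 := Gamma_pos' hμh
      have hpow : (1-t)^(j+1) = (1-t)^j * (1-t) := by ring
      rw [hpow]
      push_cast
      field_simp
      ring
    · by_cases c1 : j + 1 ≤ n + 1
      · -- j = n
        have hjn : j = n := by omega
        subst hjn
        simp only [hSdef, dt']
        rw [if_pos (by omega : j+1 ≤ j+2), if_pos (by omega : j+1 ≤ j+1),
          if_pos (by omega : j ≤ j+1), if_neg (by omega : ¬ (j+1 ≤ j))]
        simp only [Dc]
        have d1 : j+2 - (j+1) = 1 := by omega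
        have d2 : j+1 - (j+1) = 0 := by omega
        have d3 : j+1 - j = 1 := by omega
        rw [d1, d2, d3]
        set C : ℝ := 2*(j:ℝ) + 1 + 2*μ with hC
        have hCpos : (0:ℝ) < C := by positivity
        have e2 : ((j+2:ℕ):ℝ) + 2*μ + ((j+1:ℕ):ℝ) = (C + 1) + 1 := by rw [hC]; push_cast; ring
        have e1 : ((j+1:ℕ):ℝ) + 2*μ + ((j+1:ℕ):ℝ) = C + 1 := by rw [hC]; push_cast; ring
        have e0' : ((j+1:ℕ):ℝ) + 2*μ + ((j:ℕ):ℝ) = C := by rw [hC]; push_cast; ring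
        rw [e2, e1, e0', eμh, Gamma_succ' (by linarith), Gamma_succ' hCpos, Gamma_succ' hμh]
        have hfj : ((Nat.factorial (j+1) : ℝ)) = ((j:ℝ)+1) * (Nat.factorial j) := by
          rw [Nat.factorial_succ]; push_cast; ring
        rw [hfj]
        have hfjj : (Nat.factorial j : ℝ) ≠ 0 := by positivity
        have hΓC : Real.Gamma C ≠ 0 := Gamma_pos' hCpos
        have hΓμh : Real.Gamma (μ+1/2+(j:ℝ)) ≠ 0 := Gamma_pos' hμh
        have hpow : (1-t)^(j+1) = (1-t)^j * (1-t) := by ring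
        rw [hpow]
        simp only [Nat.factorial_zero, Nat.factorial_one]
        push_cast
        field_simp
        ring
      · -- j = n + 1
        have hj : j = n + 1 := by omega
        subst hj
        simp only [hSdef, dt']
        rw [if_pos (by omega : n+1+1 ≤ n+2), if_neg (by omega : ¬ (n+1+1 ≤ n+1)),
          if_pos (by omega : n+1 ≤ n+1), if_neg (by omega : ¬ (n+1+1 ≤ n))]
        simp only [Dc]
        have d1 : n+2 - (n+1+1) = 0 := by omega
        have d2 : n+1 - (n+1) = 0 := by omega
        rw [d1, d2]
        set C : ℝ := 2*(n:ℝ) + 3 + 2*μ with hC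
        have hCpos : (0:ℝ) < C := by positivity
        have e2 : ((n+2:ℕ):ℝ) + 2*μ + ((n+1+1:ℕ):ℝ) = (C - 1 + 1) + 1 := by
          rw [hC]; push_cast; ring
        have e0' : ((n+1:ℕ):ℝ) + 2*μ + ((n+1:ℕ):ℝ) = C - 1 := by rw [hC]; push_cast; ring
        have hC1pos : (0:ℝ) < C - 1 := by
          rw [hC]
          have h0 : (0:ℝ) ≤ (n:ℝ) := by positivity
          linarith
        have eμh' : (μ + 1/2 + ((n+1+1:ℕ):ℝ)) = ((μ + 1/2 + ((n+1:ℕ):ℝ))) + 1 := by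
          push_cast; ring
        have hμh' : (0:ℝ) < μ + 1/2 + ((n+1:ℕ):ℝ) := by positivity
        rw [e2, e0', eμh', Gamma_succ' (by linarith), Gamma_succ' hC1pos, Gamma_succ' hμh']
        have hfj : ((Nat.factorial (n+1+1) : ℝ)) = ((n:ℝ)+2) * (Nat.factorial (n+1)) := by
          rw [Nat.factorial_succ]; push_cast; ring
        rw [hfj]
        have hfjj : (Nat.factorial (n+1) : ℝ) ≠ 0 := by positivity
        have hΓC : Real.Gamma (C-1) ≠ 0 := Gamma_pos' hC1pos
        have hΓμh : Real.Gamma (μ+1/2+((n+1:ℕ):ℝ)) ≠ 0 := Gamma_pos' hμh'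
        have hpow : (1-t)^(n+1+1) = (1-t)^(n+1) * (1-t) := by ring
        rw [hpow]
        simp only [Nat.factorial_zero, Nat.factorial_one]
        push_cast
        field_simp
        ring

lemma geg_zero_s11 (μ : ℝ) (hμ : 0 < μ) (t : ℝ) : Gegenbauer μ 0 t = 1 := by
  rw [Gegenbauer]
  rw [Finset.sum_range_one]
  norm_num
  exact Gamma_pos' hμ

lemma alt_zero (μ : ℝ) (hμ : 0 < μ) (t : ℝ) : GegAlt μ 0 t = 1 := by
  rw [GegAlt, Finset.sum_range_one, Dc]
  norm_num
  have hΓ2μ : Real.Gamma (2*μ) ≠ 0 := Gamma_pos' (by linarith)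
  have hΓμh : Real.Gamma (μ + 1/2) ≠ 0 := Gamma_pos' (by linarith)
  field_simp
  exact ⟨hΓ2μ, by rw [show (2*μ+1)/2 = μ + 1/2 by ring]; exact hΓμh⟩

lemma geg_one (μ : ℝ) (hμ : 0 < μ) (t : ℝ) : Gegenbauer μ 1 t = 2 * μ * t := by
  rw [Gegenbauer]
  rw [Finset.sum_range_one]
  norm_num
  have e : (1:ℝ) + μ = μ + 1 := by ring
  rw [e, Gamma_succ' hμ]
  have hΓμ : Real.Gamma μ ≠ 0 := Gamma_pos' hμ
  field_simp

lemma alt_one (μ : ℝ) (hμ : 0 < μ) (t : ℝ) : GegAlt μ 1 t = 2 * μ * t := by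
  have h2μ : (0:ℝ) < 2 * μ := by linarith
  have hΓ2μ : Real.Gamma (2*μ) ≠ 0 := Gamma_pos' h2μ
  have hμh : (0:ℝ) < μ + 1/2 := by linarith
  have hΓμh : Real.Gamma (μ + 1/2) ≠ 0 := Gamma_pos' hμh
  rw [GegAlt, Finset.sum_range_succ, Finset.sum_range_one, Dc, Dc]
  norm_num
  rw [show (1:ℝ)+2*μ = 2*μ+1 from by ring]
  rw [show Real.Gamma (2*μ+1+1) = (2*μ+1)*((2*μ)*Real.Gamma (2*μ)) from by
        rw [Gamma_succ' (by linarith : (0:ℝ) < 2*μ+1), Gamma_succ' h2μ],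
      Gamma_succ' h2μ, Gamma_succ' hμh]
  field_simp
  ring

theorem geg_eq_alt (n : ℕ) : ∀ μ : ℝ, 0 < μ → ∀ t : ℝ, Gegenbauer μ n t = GegAlt μ n t := by
  induction n using Nat.twoStepInduction with
  | zero => intro μ hμ t; rw [geg_zero_s11 μ hμ t, alt_zero μ hμ t]
  | one => intro μ hμ t; rw [geg_one μ hμ t, alt_one μ hμ t]
  | more n ih1 ih2 =>
    intro μ hμ t
    have hne : ((n:ℝ) + 2) ≠ 0 := by positivity
    have h := rec_geg μ hμ n t
    rw [ih2 μ hμ t, ih1 μ hμ t, ← rec_alt μ hμ n t] at h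
    exact mul_left_cancel₀ hne h


lemma realBeta (a b : ℝ) (ha : 0 < a) (hb : 0 < b) :
    ∫ s in (0:ℝ)..1, s ^ (a - 1) * (1 - s) ^ (b - 1) =
      Real.Gamma a * Real.Gamma b / Real.Gamma (a + b) := by
  have h := Complex.Gamma_mul_Gamma_eq_betaIntegral (s := (a : ℂ)) (t := (b : ℂ))
    (by simpa using ha) (by simpa using hb)
  have hcast : Complex.betaIntegral (a : ℂ) (b : ℂ)
      = ((∫ s in (0:ℝ)..1, s ^ (a - 1) * (1 - s) ^ (b - 1) : ℝ) : ℂ) := by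
    rw [Complex.betaIntegral, ← intervalIntegral.integral_ofReal]
    refine intervalIntegral.integral_congr fun s hs => ?_
    rw [Set.uIcc_of_le (by norm_num : (0:ℝ) ≤ 1)] at hs
    obtain ⟨h0, h1⟩ := hs
    push_cast
    rw [Complex.ofReal_cpow h0, Complex.ofReal_cpow (by linarith : (0:ℝ) ≤ 1 - s)]
    push_cast
    ring
  rw [hcast] at h
  have hΓab : Complex.Gamma ((a : ℂ) + b) ≠ 0 :=
    Complex.Gamma_ne_zero_of_re_pos (by simp; positivity)
  have : ((Real.Gamma a * Real.Gamma b : ℝ) : ℂ)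
      = ((Real.Gamma (a + b) * ∫ s in (0:ℝ)..1, s ^ (a - 1) * (1 - s) ^ (b - 1) : ℝ) : ℂ) := by
    push_cast
    rw [← Complex.Gamma_ofReal, ← Complex.Gamma_ofReal, ← Complex.Gamma_ofReal]
    push_cast at h ⊢
    rw [h]
  have h2 := Complex.ofReal_injective this
  have hΓab' : Real.Gamma (a + b) ≠ 0 := Gamma_pos' (by positivity)
  field_simp
  linarith [h2]

lemma intJ (μ : ℝ) (hμ : -1 < μ) {x : ℝ} (hx : x < 1) :
    ∫ t in x..(1:ℝ), (1 - t) ^ μ * (t - x) ^ (-(1/2) : ℝ)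
      = (1 - x) ^ (μ + 1/2) *
          (Real.Gamma (1/2) * Real.Gamma (μ + 1) / Real.Gamma (μ + 3/2)) := by
  have hc : (0:ℝ) < 1 - x := by linarith
  have key := intervalIntegral.mul_integral_comp_mul_add
    (f := fun t => (1 - t) ^ μ * (t - x) ^ (-(1/2) : ℝ)) (a := 0) (b := 1)
    (c := 1 - x) (d := x)
  have e1 : (1 - x) * 0 + x = x := by ring
  have e2 : (1 - x) * 1 + x = 1 := by ring
  rw [e1, e2] at key
  rw [← key]
  have hpt : ∀ s ∈ Set.uIcc (0:ℝ) 1,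
      (1 - ((1 - x) * s + x)) ^ μ * ((1 - x) * s + x - x) ^ (-(1/2) : ℝ)
        = ((1 - x) ^ μ * (1 - x) ^ (-(1/2) : ℝ)) * (s ^ ((1:ℝ)/2 - 1) * (1 - s) ^ (μ + 1 - 1)) := by
    intro s hs
    rw [Set.uIcc_of_le (by norm_num : (0:ℝ) ≤ 1)] at hs
    obtain ⟨h0, h1⟩ := hs
    have b1 : 1 - ((1 - x) * s + x) = (1 - x) * (1 - s) := by ring
    have b2 : (1 - x) * s + x - x = (1 - x) * s := by ring
    rw [b1, b2, Real.mul_rpow (by linarith) (by linarith),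
      Real.mul_rpow (by linarith) h0]
    have c1 : (-(1/2) : ℝ) = (1:ℝ)/2 - 1 := by norm_num
    have c2 : μ = μ + 1 - 1 := by ring
    rw [c1]
    nth_rewrite 2 [c2]
    ring
  rw [intervalIntegral.integral_congr hpt, intervalIntegral.integral_const_mul,
    realBeta (1/2) (μ + 1) (by norm_num) (by linarith)]
  have e3 : (1:ℝ)/2 + (μ + 1) = μ + 3/2 := by ring
  rw [e3]
  have e4 : (1 - x) * ((1 - x) ^ μ * (1 - x) ^ (-(1/2) : ℝ)) = (1 - x) ^ (μ + 1/2) := by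
    nth_rewrite 1 [show (1 - x) = (1 - x) ^ (1:ℝ) from (Real.rpow_one _).symm]
    rw [← Real.rpow_add hc, ← Real.rpow_add hc]
    congr 1
    ring
  rw [← mul_assoc, e4]

lemma intTerm (c : ℝ) (hc : 0 < c) (x : ℝ) :
    IntervalIntegrable (fun t => (1 - t) ^ c * (t - x) ^ (-(1/2) : ℝ)) volume x 1 := by
  have h0 : IntervalIntegrable (fun s : ℝ => s ^ (-(1/2) : ℝ)) volume 0 (1 - x) :=
    intervalIntegral.intervalIntegrable_rpow' (by norm_num)
  have h1 : IntervalIntegrable (fun t : ℝ => (t - x) ^ (-(1/2) : ℝ)) volume x 1 := by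
    have h2 := h0.comp_sub_right x
    simpa using h2
  refine h1.continuousOn_mul ?_
  refine ContinuousOn.rpow_const ?_ fun t _ => Or.inr hc.le
  exact (continuous_const.sub continuous_id).continuousOn

lemma geg_at_one (μ : ℝ) (hμ : 0 < μ) (m : ℕ) : Gegenbauer μ m 1 = Dc μ m 0 := by
  rw [geg_eq_alt m μ hμ 1, GegAlt]
  rw [show (1:ℝ) - 1 = 0 from by ring]
  rw [Finset.sum_eq_single 0 (fun k _ hk => by rw [zero_pow hk, mul_zero])
    (fun h => absurd (Finset.mem_range.mpr (Nat.succ_pos m)) h)]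
  rw [pow_zero, mul_one]

lemma bracket_one (lam : ℝ) (hlam : 0 < lam) (n : ℕ) :
    ((n:ℝ) + 2*lam) * Dc lam n 0 - ((n:ℝ) + 1) * Dc lam (n+1) 0 = 0 := by
  simp only [Dc, Nat.sub_zero, pow_zero]
  have e0 : ((n:ℕ):ℝ) + 2*lam + ((0:ℕ):ℝ) = (n:ℝ) + 2*lam := by push_cast; ring
  have e1 : ((n+1:ℕ):ℝ) + 2*lam + ((0:ℕ):ℝ) = ((n:ℝ) + 2*lam) + 1 := by push_cast; ring
  have hp : (0:ℝ) < (n:ℝ) + 2*lam := by positivity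
  rw [e0, e1, Gamma_succ' hp]
  have hf : ((Nat.factorial (n+1) : ℝ)) = ((n:ℝ)+1) * (Nat.factorial n) := by
    rw [Nat.factorial_succ]; push_cast; ring
  rw [hf]
  have h1 : (Nat.factorial n : ℝ) ≠ 0 := by positivity
  have h2 : Real.Gamma (2*lam) ≠ 0 := Gamma_pos' (by linarith)
  have h3 : Real.Gamma (lam + 1/2 + ((0:ℕ):ℝ)) ≠ 0 := by
    refine Gamma_pos' ?_
    push_cast
    linarith
  field_simp
  ring

lemma coeffId (lam : ℝ) (hlam : 0 < lam) (n j : ℕ) (hj : j ≤ n) :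
    (1/Real.Gamma lam) * (Dc (lam + 1/2) n j *
        (Real.Gamma (1/2) * Real.Gamma ((lam + (j:ℝ)) + 1) / Real.Gamma ((lam + (j:ℝ)) + 3/2)))
      = (Real.sqrt Real.pi / (2 * Real.Gamma (lam + 1/2) * ((n:ℝ) + lam + 1/2))) *
          (((n:ℝ) + 2*lam) * (if j + 1 ≤ n then Dc lam n (j+1) else 0)
            - ((n:ℝ) + 1) * Dc lam (n+1) (j+1)) := by
  have hΓlam : Real.Gamma lam ≠ 0 := Gamma_pos' hlam
  have h2lam : (0:ℝ) < 2*lam := by linarith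
  have hΓ2lam : Real.Gamma (2*lam) ≠ 0 := Gamma_pos' h2lam
  have hlh : (0:ℝ) < lam + 1/2 := by linarith
  have hΓlh : Real.Gamma (lam + 1/2) ≠ 0 := Gamma_pos' hlh
  have hlhj : (0:ℝ) < lam + 1/2 + (j:ℝ) := by positivity
  have hΓlhj : Real.Gamma (lam + 1/2 + (j:ℝ)) ≠ 0 := Gamma_pos' hlhj
  have hG6 : (0:ℝ) < (n:ℝ) + 2*lam + ((j+1:ℕ):ℝ) := by positivity
  rw [Real.Gamma_one_half_eq]
  simp only [Dc]
  -- rewrite all Gamma arguments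
  rw [show ((n:ℕ):ℝ) + 2*(lam+1/2) + ((j:ℕ):ℝ) = ((n:ℕ):ℝ) + 2*lam + ((j+1:ℕ):ℝ) from by
        push_cast; ring,
      show lam + 1/2 + 1/2 = lam + 1 from by ring,
      show (2:ℝ)*(lam+1/2) = (2*lam) + 1 from by ring,
      show lam + 1 + ((j:ℕ):ℝ) = (lam + (j:ℝ)) + 1 from by push_cast; ring,
      show (lam + (j:ℝ)) + 3/2 = (lam + 1/2 + (j:ℝ)) + 1 from by ring,
      show ((n+1:ℕ):ℝ) + 2*lam + ((j+1:ℕ):ℝ) = (((n:ℕ):ℝ) + 2*lam + ((j+1:ℕ):ℝ)) + 1 from by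
        push_cast; ring,
      show lam + 1/2 + ((j+1:ℕ):ℝ) = (lam + 1/2 + (j:ℝ)) + 1 from by push_cast; ring,
      Gamma_succ' hlam, Gamma_succ' h2lam, Gamma_succ' hlhj, Gamma_succ' hG6]
  have hfact : ((Nat.factorial (j+1) : ℝ)) = ((j:ℝ)+1) * (Nat.factorial j) := by
    rw [Nat.factorial_succ]; push_cast; ring
  have hfj : (Nat.factorial j : ℝ) ≠ 0 := by positivity
  have hnl : ((n:ℝ) + lam + 1/2) ≠ 0 := by positivity
  have hsq : Real.sqrt Real.pi ≠ 0 := by positivity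
  by_cases hcase : j + 1 ≤ n
  · rw [if_pos hcase]
    obtain ⟨m, rfl⟩ : ∃ m, n = j + 1 + m := ⟨n - (j+1), by omega⟩
    have c1 : j+1+m - j = m+1 := by omega
    have c2 : j+1+m - (j+1) = m := by omega
    have c3 : j+1+m+1 - (j+1) = m+1 := by omega
    rw [c1, c2, c3, hfact]
    have hfm1 : ((Nat.factorial (m+1) : ℝ)) = ((m:ℝ)+1) * (Nat.factorial m) := by
      rw [Nat.factorial_succ]; push_cast; ring
    rw [hfm1]
    have hfm : (Nat.factorial m : ℝ) ≠ 0 := by positivity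
    rw [pow_succ (-1:ℝ) j, pow_succ (2:ℝ) j]
    push_cast
    field_simp
    ring
  · rw [if_neg hcase]
    obtain rfl : j = n := by omega
    have c1 : j - j = 0 := by omega
    have c3 : j+1 - (j+1) = 0 := by omega
    rw [c1, c3, hfact]
    rw [pow_succ (-1:ℝ) j, pow_succ (2:ℝ) j]
    simp only [Nat.factorial_zero]
    push_cast
    field_simp
    ring


end

/-- fractional integral of `C_n^{λ+1/2}` against `(1−t)^λ (t−x)^{−1/2}`. -/
theorem stmt11 (lam : ℝ) (hlam : 0 < lam) (n : ℕ) (x : ℝ) (hx : x ∈ Set.Icc (-1 : ℝ) 1) :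
    (1 / Real.Gamma lam) *
        ∫ t in x..(1 : ℝ), (1 - t) ^ lam * (t - x) ^ (-(1 / 2) : ℝ) * Gegenbauer (lam + 1 / 2) n t =
      (Real.sqrt Real.pi / (2 * Real.Gamma (lam + 1 / 2) * ((n : ℝ) + lam + 1 / 2))) *
        (1 - x) ^ (lam - 1 / 2) *
        (((n : ℝ) + 2 * lam) * Gegenbauer lam n x - ((n : ℝ) + 1) * Gegenbauer lam (n + 1) x) := by
  obtain ⟨hx1, hx2⟩ := hx
  rcases hx2.eq_or_lt with heq | hlt
  · subst heq
    rw [intervalIntegral.integral_same, mul_zero,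
      geg_at_one lam hlam n, geg_at_one lam hlam (n+1), bracket_one lam hlam n, mul_zero]
  · have hc' : (0:ℝ) < 1 - x := by linarith
    have hμ2 : (0:ℝ) < lam + 1/2 := by linarith
    have hInt : ∀ k ∈ Finset.range (n+1), IntervalIntegrable
        (fun t => Dc (lam+1/2) n k * ((1-t)^(lam+(k:ℝ)) * (t-x)^(-(1/2):ℝ))) volume x 1 := by
      intro k _
      exact (intTerm (lam+(k:ℝ)) (by positivity) x).const_mul _
    have hcong : Set.EqOn
        (fun t => (1 - t) ^ lam * (t - x) ^ (-(1 / 2) : ℝ) * Gegenbauer (lam + 1 / 2) n t)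
        (fun t => ∑ k ∈ Finset.range (n+1),
          Dc (lam+1/2) n k * ((1-t)^(lam+(k:ℝ)) * (t-x)^(-(1/2):ℝ)))
        (Set.uIcc x 1) := by
      intro t ht
      rw [Set.uIcc_of_le hlt.le] at ht
      obtain ⟨ht1, ht2⟩ := ht
      simp only
      rw [geg_eq_alt n (lam+1/2) hμ2 t, GegAlt, Finset.mul_sum]
      refine Finset.sum_congr rfl fun k _ => ?_
      rw [← Real.rpow_natCast (1-t) k, Real.rpow_add' (by linarith : (0:ℝ) ≤ 1-t)
        (by positivity : lam + (k:ℝ) ≠ 0)]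
      ring
    have hL : (∫ t in x..(1:ℝ),
          (1 - t) ^ lam * (t - x) ^ (-(1 / 2) : ℝ) * Gegenbauer (lam + 1 / 2) n t)
        = ∑ k ∈ Finset.range (n+1), Dc (lam+1/2) n k *
            ((1-x)^((lam+(k:ℝ))+1/2) *
              (Real.Gamma (1/2) * Real.Gamma ((lam+(k:ℝ))+1) / Real.Gamma ((lam+(k:ℝ))+3/2))) := by
      rw [intervalIntegral.integral_congr hcong, intervalIntegral.integral_finset_sum hInt]
      refine Finset.sum_congr rfl fun k _ => ?_
      rw [intervalIntegral.integral_const_mul,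
        intJ (lam+(k:ℝ)) (by have h0 : (0:ℝ) ≤ (k:ℝ) := Nat.cast_nonneg k; linarith) hlt]
    rw [hL, Finset.mul_sum]
    have hR : (Real.sqrt Real.pi / (2 * Real.Gamma (lam + 1/2) * ((n:ℝ) + lam + 1/2))) *
          (1-x)^(lam - 1/2) *
          (((n:ℝ) + 2*lam) * Gegenbauer lam n x - ((n:ℝ)+1) * Gegenbauer lam (n+1) x)
        = ∑ j ∈ Finset.range (n+1),
            (Real.sqrt Real.pi / (2 * Real.Gamma (lam + 1/2) * ((n:ℝ) + lam + 1/2))) *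
              ((1-x)^(lam - 1/2) *
                (((n:ℝ) + 2*lam) * dt' lam n (j+1) x - ((n:ℝ)+1) * dt' lam (n+1) (j+1) x)) := by
      rw [geg_eq_alt n lam hlam x, geg_eq_alt (n+1) lam hlam x,
        alt_eq_sum_dt lam n x (show n+1 ≤ n+2 by omega),
        alt_eq_sum_dt lam (n+1) x (le_refl (n+2)),
        Finset.mul_sum, Finset.mul_sum, ← Finset.sum_sub_distrib, Finset.sum_range_succ']
      have hzero : ((n:ℝ)+2*lam) * dt' lam n 0 x - ((n:ℝ)+1) * dt' lam (n+1) 0 x = 0 := by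
        simp only [dt', if_pos (Nat.zero_le n), if_pos (Nat.zero_le (n+1)), pow_zero, mul_one]
        exact bracket_one lam hlam n
      rw [hzero, add_zero, Finset.mul_sum]
      exact Finset.sum_congr rfl fun j _ => by ring
    rw [hR]
    refine Finset.sum_congr rfl fun j hj => ?_
    rw [Finset.mem_range] at hj
    have hjn : j ≤ n := by omega
    have hcid := coeffId lam hlam n j hjn
    have hpow : (1-x)^(lam - 1/2) * (1-x)^(j+1) = (1-x)^((lam+(j:ℝ))+1/2) := by
      rw [← Real.rpow_natCast (1-x) (j+1), ← Real.rpow_add hc']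
      congr 1
      push_cast
      ring
    simp only [dt']
    rw [if_pos (show j+1 ≤ n+1 by omega), ← hpow]
    by_cases hcase : j+1 ≤ n
    · rw [if_pos hcase]
      rw [if_pos hcase] at hcid
      linear_combination ((1-x)^(lam - 1/2) * (1-x)^(j+1)) * hcid
    · rw [if_neg hcase]
      rw [if_neg hcase] at hcid
      linear_combination ((1-x)^(lam - 1/2) * (1-x)^(j+1)) * hcid
end

section
/- For every λ ≥ 1, n ∈ ℕ₀ and x ∈ [−1,1], (1/Γ(λ)) ∫_x^1 (1−t)^{λ−1}(t−x)^{−1/2} C_{n+1}^{λ−1/2}(t) dt = (√π / (Γ(λ−1/2)(n+λ+1/2))) (1−x)^{λ−1/2}[C_{n+1}^λ(x) + C_n^λ(x)], and (1/Γ(λ)) ∫_{−1}^x (1+t)^{λ−1}(x−t)^{−1/2} C_{n+1}^{λ−1/2}(t) dt = (√π / (Γ(λ−1/2)(n+λ+1/2))) (1+x)^{λ−1/2}[C_{n+1}^λ(x) − C_n^λ(x)]. -/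
open Real MeasureTheory Finset intervalIntegral

noncomputable section AuxGeg

def pch (x : ℝ) (n : ℕ) : ℝ := (ascPochhammer ℝ n).eval x

lemma pch_zero (x : ℝ) : pch x 0 = 1 := by simp [pch]

lemma pch_succ_right (x : ℝ) (n : ℕ) : pch x (n + 1) = pch x n * (x + n) := by
  simp [pch, ascPochhammer_succ_eval]

lemma pch_succ_left (x : ℝ) (n : ℕ) : pch x (n + 1) = x * pch (x + 1) n := by
  simp [pch, ascPochhammer_succ_left, Polynomial.eval_mul, Polynomial.eval_comp]

lemma pch_pos {x : ℝ} (hx : 0 < x) (n : ℕ) : 0 < pch x n := by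
  induction n with
  | zero => simp [pch_zero]
  | succ n ih => rw [pch_succ_right]; positivity

lemma Gamma_nat_add {x : ℝ} (hx : 0 < x) (n : ℕ) :
    Real.Gamma (x + n) = pch x n * Real.Gamma x := by
  induction n with
  | zero => simp [pch_zero]
  | succ n ih =>
    have h1 : x + (n + 1 : ℕ) = (x + n) + 1 := by push_cast; ring
    rw [h1, Real.Gamma_add_one (by positivity), ih, pch_succ_right]; ring

def gcoef (mu : ℝ) (m k : ℕ) : ℝ :=
  (-1 : ℝ) ^ k * pch mu (m - k) / ((Nat.factorial k : ℝ) * (Nat.factorial (m - 2 * k) : ℝ))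

def Gfun (mu : ℝ) (m : ℕ) (x : ℝ) : ℝ :=
  ∑ k ∈ Finset.range (m / 2 + 1), gcoef mu m k * (2 * x) ^ (m - 2 * k)

lemma Gegenbauer_eq_Gfun {mu : ℝ} (hmu : 0 < mu) (m : ℕ) (x : ℝ) :
    Gegenbauer mu m x = Gfun mu m x := by
  refine Finset.sum_congr rfl fun k hk => ?_
  have hk' : k ≤ m := by
    have := Finset.mem_range.mp hk
    omega
  have h1 : (m : ℝ) - (k : ℝ) + mu = mu + ((m - k : ℕ) : ℝ) := by
    push_cast [hk']; ring
  rw [h1, Gamma_nat_add hmu]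
  unfold gcoef
  have hΓ : Real.Gamma mu ≠ 0 := (Real.Gamma_pos_of_pos hmu).ne'
  field_simp

def tfun (mu : ℝ) (m k : ℕ) : ℝ :=
  if 2 * k ≤ m then gcoef mu m k * 2 ^ (m - 2 * k) else 0

lemma Gfun_one_eq_sum_tfun (mu : ℝ) (m : ℕ) :
    Gfun mu m 1 = ∑ k ∈ Finset.range (m + 1), tfun mu m k := by
  rw [Gfun]
  have h1 : ∀ k ∈ Finset.range (m / 2 + 1), gcoef mu m k * (2 * 1) ^ (m - 2 * k) = tfun mu m k := by
    intro k hk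
    have h2k : 2 * k ≤ m := by have := Finset.mem_range.mp hk; omega
    simp only [tfun, if_pos h2k]
    norm_num
  rw [Finset.sum_congr rfl h1]
  refine Finset.sum_subset (Finset.range_subset_range.mpr (by omega : m / 2 + 1 ≤ m + 1)) ?_
  intro k _ hk
  have hk2' : m / 2 + 1 ≤ k := by
    by_contra h
    exact hk (Finset.mem_range.mpr (by omega))
  have h2k : ¬ (2 * k ≤ m) := by omega
  simp only [tfun, if_neg h2k]

lemma cert (mu : ℝ) (m k : ℕ) :
    ((m : ℝ) + 1) * tfun mu (m + 1) k - (2 * mu + m) * tfun mu m k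
      = (-(2 : ℝ) * ((k : ℝ) + 1)) * tfun mu (m + 1) (k + 1) - (-(2 : ℝ) * k) * tfun mu (m + 1) k := by
  have hk0 : (Nat.factorial k : ℝ) ≠ 0 := by positivity
  rcases le_or_gt (2 * (k + 1)) (m + 1) with h1 | h1
  · -- all four alive
    obtain ⟨r, rfl⟩ : ∃ r, m = 2 * k + 1 + r := ⟨m - (2 * k + 1), by omega⟩
    have c1 : 2 * k ≤ 2 * k + 1 + r + 1 := by omega
    have c2 : 2 * k ≤ 2 * k + 1 + r := by omega
    have c3 : 2 * (k + 1) ≤ 2 * k + 1 + r + 1 := by omega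
    simp only [tfun, if_pos c1, if_pos c2, if_pos c3, gcoef]
    have e1 : 2 * k + 1 + r + 1 - k = (k + r + 1) + 1 := by omega
    have e2 : 2 * k + 1 + r + 1 - 2 * k = r + 2 := by omega
    have e3 : 2 * k + 1 + r - k = k + r + 1 := by omega
    have e4 : 2 * k + 1 + r - 2 * k = r + 1 := by omega
    have e5 : 2 * k + 1 + r + 1 - (k + 1) = k + r + 1 := by omega
    have e6 : 2 * k + 1 + r + 1 - 2 * (k + 1) = r := by omega
    rw [e1, e2, e3, e4, e5, e6, pch_succ_right]
    have hr0 : (Nat.factorial r : ℝ) ≠ 0 := by positivity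
    have f2 : ((r + 2).factorial : ℝ) = ((r : ℝ) + 2) * ((r : ℝ) + 1) * (Nat.factorial r : ℝ) := by
      rw [Nat.factorial_succ, Nat.factorial_succ]; push_cast; ring
    have f1 : ((r + 1).factorial : ℝ) = ((r : ℝ) + 1) * (Nat.factorial r : ℝ) := by
      rw [Nat.factorial_succ]; push_cast; ring
    have fk : ((k + 1).factorial : ℝ) = ((k : ℝ) + 1) * (Nat.factorial k : ℝ) := by
      rw [Nat.factorial_succ]; push_cast; ring
    have p1 : (2 : ℝ) ^ (r + 2) = 4 * 2 ^ r := by ring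
    have p2 : (2 : ℝ) ^ (r + 1) = 2 * 2 ^ r := by ring
    have pk : (-1 : ℝ) ^ (k + 1) = -(-1 : ℝ) ^ k := by ring
    rw [f2, f1, fk, p1, p2, pk]
    have hk1 : ((k : ℝ) + 1) ≠ 0 := by positivity
    have hr1 : ((r : ℝ) + 1) ≠ 0 := by positivity
    have hr2 : ((r : ℝ) + 2) ≠ 0 := by positivity
    field_simp
    push_cast
    ring
  · rcases le_or_gt (2 * k) m with h2 | h2
    · -- 2k = m
      have hm : m = 2 * k := by omega
      subst hm
      have c1 : 2 * k ≤ 2 * k + 1 := by omega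
      have c2 : 2 * k ≤ 2 * k := le_refl _
      have c3 : ¬ (2 * (k + 1) ≤ 2 * k + 1) := by omega
      simp only [tfun, if_pos c1, if_pos c2, if_neg c3, gcoef]
      have e1 : 2 * k + 1 - k = k + 1 := by omega
      have e2 : 2 * k + 1 - 2 * k = 1 := by omega
      have e3 : 2 * k - k = k := by omega
      have e4 : 2 * k - 2 * k = 0 := by omega
      rw [e1, e2, e3, e4, pch_succ_right]
      simp only [Nat.factorial_one, Nat.factorial_zero, Nat.cast_one, pow_one, pow_zero]
      field_simp
      push_cast
      ring
    · rcases le_or_gt (2 * k) (m + 1) with h3 | h3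
      · -- 2k = m+1
        have hm : m + 1 = 2 * k := by omega
        have c2 : ¬ (2 * k ≤ m) := by omega
        have c3 : ¬ (2 * (k + 1) ≤ m + 1) := by omega
        have c1 : 2 * k ≤ m + 1 := by omega
        simp only [tfun, if_pos c1, if_neg c2, if_neg c3]
        have : ((m : ℝ) + 1) = 2 * k := by exact_mod_cast congrArg Nat.cast hm
        rw [this]
        ring
      · -- all dead
        have c1 : ¬ (2 * k ≤ m + 1) := by omega
        have c2 : ¬ (2 * k ≤ m) := by omega
        have c3 : ¬ (2 * (k + 1) ≤ m + 1) := by omega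
        simp only [tfun, if_neg c1, if_neg c2, if_neg c3]
        ring

lemma Gfun_one (mu : ℝ) (m : ℕ) : Gfun mu m 1 = pch (2 * mu) m / (Nat.factorial m : ℝ) := by
  induction m with
  | zero =>
    simp [Gfun, gcoef, pch_zero]
  | succ m ih =>
    have tele : ∑ k ∈ Finset.range (m + 2),
        (((m : ℝ) + 1) * tfun mu (m + 1) k - (2 * mu + m) * tfun mu m k) = 0 := by
      have := Finset.sum_range_sub (fun k : ℕ => (-(2 : ℝ) * k) * tfun mu (m + 1) k) (m + 2)
      rw [Finset.sum_congr rfl (fun k _ => cert mu m k)]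
      push_cast at this ⊢
      rw [this]
      have hdead : tfun mu (m + 1) (m + 2) = 0 := by
        simp only [tfun, if_neg (by omega : ¬ (2 * (m + 2) ≤ m + 1))]
      rw [hdead]
      push_cast
      ring
    rw [Finset.sum_sub_distrib, ← Finset.mul_sum, ← Finset.mul_sum, sub_eq_zero] at tele
    have h2 : ∑ k ∈ Finset.range (m + 2), tfun mu m k = ∑ k ∈ Finset.range (m + 1), tfun mu m k := by
      rw [Finset.sum_range_succ]
      have hdead : tfun mu m (m + 1) = 0 := by
        simp only [tfun, if_neg (by omega : ¬ (2 * (m + 1) ≤ m))]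
      rw [hdead, add_zero]
    rw [h2, ← Gfun_one_eq_sum_tfun, ← Gfun_one_eq_sum_tfun, ih] at tele
    have hm1 : ((m : ℝ) + 1) ≠ 0 := by positivity
    have hfm : (Nat.factorial m : ℝ) ≠ 0 := by positivity
    rw [pch_succ_right]
    have hfm1 : ((m + 1).factorial : ℝ) = ((m : ℝ) + 1) * (Nat.factorial m : ℝ) := by
      rw [Nat.factorial_succ]; push_cast; ring
    rw [hfm1]
    field_simp at tele ⊢
    linarith [tele]

lemma hasDerivAt_Gfun (mu : ℝ) (m : ℕ) (x : ℝ) :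
    HasDerivAt (fun y => Gfun mu (m + 1) y) (2 * mu * Gfun (mu + 1) m x) x := by
  have hterm : ∀ k : ℕ, HasDerivAt (fun y => gcoef mu (m + 1) k * (2 * y) ^ (m + 1 - 2 * k))
      (gcoef mu (m + 1) k * ((((m + 1 - 2 * k : ℕ) : ℝ) * (2 * x) ^ (m + 1 - 2 * k - 1)) * 2)) x := by
    intro k
    have h2y : HasDerivAt (fun y : ℝ => 2 * y) 2 x := by
      simpa using (hasDerivAt_id x).const_mul (2 : ℝ)
    exact ((hasDerivAt_pow (m + 1 - 2 * k) (2 * x)).comp x h2y).const_mul _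
  have hsum := HasDerivAt.sum (fun k (_ : k ∈ Finset.range ((m + 1) / 2 + 1)) => hterm k)
  have key : ∑ k ∈ Finset.range ((m + 1) / 2 + 1),
      (gcoef mu (m + 1) k * ((((m + 1 - 2 * k : ℕ) : ℝ) * (2 * x) ^ (m + 1 - 2 * k - 1)) * 2))
      = 2 * mu * Gfun (mu + 1) m x := by
    have hper : ∀ k, 2 * k ≤ m →
        gcoef mu (m + 1) k * ((((m + 1 - 2 * k : ℕ) : ℝ) * (2 * x) ^ (m + 1 - 2 * k - 1)) * 2)
        = 2 * mu * (gcoef (mu + 1) m k * (2 * x) ^ (m - 2 * k)) := by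
      intro k hk
      obtain ⟨r, rfl⟩ : ∃ r, m = 2 * k + r := ⟨m - 2 * k, by omega⟩
      have e1 : 2 * k + r + 1 - k = (k + r) + 1 := by omega
      have e2 : 2 * k + r + 1 - 2 * k = r + 1 := by omega
      have e3 : 2 * k + r + 1 - 2 * k - 1 = r := by omega
      have e4 : 2 * k + r - k = k + r := by omega
      have e5 : 2 * k + r - 2 * k = r := by omega
      simp only [gcoef, e1, e2, e3, e4, e5]
      rw [pch_succ_left]
      have f1 : ((r + 1).factorial : ℝ) = ((r : ℝ) + 1) * (Nat.factorial r : ℝ) := by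
        rw [Nat.factorial_succ]; push_cast; ring
      rw [f1]
      have hk0 : (Nat.factorial k : ℝ) ≠ 0 := by positivity
      have hr0 : (Nat.factorial r : ℝ) ≠ 0 := by positivity
      have hr1 : ((r : ℝ) + 1) ≠ 0 := by positivity
      push_cast
      field_simp
    rcases Nat.even_or_odd m with ⟨l, hl⟩ | ⟨l, hl⟩
    · subst hl
      have hrange : (l + l + 1) / 2 + 1 = (l + l) / 2 + 1 := by omega
      rw [hrange, Gfun, Finset.mul_sum]
      refine Finset.sum_congr rfl fun k hk => ?_
      exact hper k (by have := Finset.mem_range.mp hk; omega)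
    · subst hl
      have hrange : (2 * l + 1 + 1) / 2 + 1 = ((2 * l + 1) / 2 + 1) + 1 := by omega
      rw [hrange, Finset.sum_range_succ]
      have hlast : gcoef mu (2 * l + 1 + 1) ((2 * l + 1) / 2 + 1) *
          ((((2 * l + 1 + 1 - 2 * ((2 * l + 1) / 2 + 1) : ℕ) : ℝ) *
            (2 * x) ^ (2 * l + 1 + 1 - 2 * ((2 * l + 1) / 2 + 1) - 1)) * 2) = 0 := by
        have : 2 * l + 1 + 1 - 2 * ((2 * l + 1) / 2 + 1) = 0 := by omega
        rw [this]
        norm_num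
      rw [hlast, add_zero, Gfun, Finset.mul_sum]
      refine Finset.sum_congr rfl fun k hk => ?_
      exact hper k (by have := Finset.mem_range.mp hk; omega)
  rw [← key]
  refine hsum.congr_of_eventuallyEq (Filter.Eventually.of_forall fun y => ?_)
  rw [Finset.sum_apply]
  rfl

def ecoef (mu : ℝ) (m j : ℕ) : ℝ :=
  2 ^ j * pch mu j * pch (2 * mu + 2 * (j : ℝ)) (m - j) /
    ((Nat.factorial j : ℝ) * (Nat.factorial (m - j) : ℝ))

def Efun (mu : ℝ) (m : ℕ) (x : ℝ) : ℝ :=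
  ∑ j ∈ Finset.range (m + 1), ecoef mu m j * (x - 1) ^ j

lemma hasDerivAt_Efun (mu : ℝ) (m : ℕ) (x : ℝ) :
    HasDerivAt (fun y => Efun mu (m + 1) y) (2 * mu * Efun (mu + 1) m x) x := by
  have hterm : ∀ j : ℕ, HasDerivAt (fun y => ecoef mu (m + 1) j * (y - 1) ^ j)
      (ecoef mu (m + 1) j * (((j : ℝ) * (x - 1) ^ (j - 1)) * 1)) x := by
    intro j
    exact ((hasDerivAt_pow j (x - 1)).comp x ((hasDerivAt_id x).sub_const 1)).const_mul _
  have hsum := HasDerivAt.sum (fun j (_ : j ∈ Finset.range (m + 2)) => hterm j)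
  have key : ∑ j ∈ Finset.range (m + 2),
      ecoef mu (m + 1) j * (((j : ℝ) * (x - 1) ^ (j - 1)) * 1)
      = 2 * mu * Efun (mu + 1) m x := by
    rw [Finset.sum_range_succ']
    have h0 : ecoef mu (m + 1) 0 * (((0 : ℕ) : ℝ) * (x - 1) ^ (0 - 1) * 1) = 0 := by norm_num
    rw [h0, add_zero, Efun, Finset.mul_sum]
    refine Finset.sum_congr rfl fun j hj => ?_
    have e1 : j + 1 - 1 = j := by omega
    have e2 : m + 1 - (j + 1) = m - j := by omega
    simp only [e1, e2, ecoef]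
    have hb : 2 * mu + 2 * ((j + 1 : ℕ) : ℝ) = 2 * (mu + 1) + 2 * (j : ℝ) := by push_cast; ring
    rw [hb, pch_succ_left]
    have fj : ((j + 1).factorial : ℝ) = ((j : ℝ) + 1) * (Nat.factorial j : ℝ) := by
      rw [Nat.factorial_succ]; push_cast; ring
    rw [fj]
    have hj0 : (Nat.factorial j : ℝ) ≠ 0 := by positivity
    have hmj : ((m - j).factorial : ℝ) ≠ 0 := by positivity
    have hj1 : ((j : ℝ) + 1) ≠ 0 := by positivity
    push_cast
    field_simp
    ring
  rw [← key]
  refine hsum.congr_of_eventuallyEq (Filter.Eventually.of_forall fun y => ?_)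
  rw [Finset.sum_apply]
  rfl

lemma Gfun_eq_Efun (m : ℕ) : ∀ (mu x : ℝ), Gfun mu m x = Efun mu m x := by
  induction m with
  | zero =>
    intro mu x
    simp [Gfun, Efun, gcoef, ecoef, pch_zero]
  | succ m ih =>
    intro mu x
    have hd : ∀ y : ℝ, HasDerivAt (fun z => Gfun mu (m + 1) z - Efun mu (m + 1) z) 0 y := by
      intro y
      have h := (hasDerivAt_Gfun mu m y).sub (hasDerivAt_Efun mu m y)
      rw [ih (mu + 1) y, sub_self] at h
      exact h
    have hconst := is_const_of_deriv_eq_zero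
      (fun y => ((hd y).differentiableAt : DifferentiableAt ℝ _ y))
      (fun y => (hd y).deriv) x 1
    have hE1 : Efun mu (m + 1) 1 = pch (2 * mu) (m + 1) / ((m + 1).factorial : ℝ) := by
      rw [Efun, Finset.sum_eq_single_of_mem 0 (Finset.mem_range.mpr (by omega))]
      · simp [ecoef, pch_zero]
      · intro j _ hj
        simp [zero_pow hj]
    have hG1 := Gfun_one mu (m + 1)
    have : Gfun mu (m + 1) x - Efun mu (m + 1) x = 0 := by
      rw [hconst, hG1, hE1, sub_self]
    linarith [this]

lemma Gegenbauer_eq_Efun {mu : ℝ} (hmu : 0 < mu) (m : ℕ) (x : ℝ) :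
    Gegenbauer mu m x = ∑ j ∈ Finset.range (m + 1), ecoef mu m j * (x - 1) ^ j := by
  rw [Gegenbauer_eq_Gfun hmu, Gfun_eq_Efun, Efun]

lemma keyId (lam : ℝ) (n j : ℕ) (hj : j ≤ n) :
    ecoef (lam - 1/2) (n + 1) j * pch lam j * ((n : ℝ) + lam + 1/2)
      = (ecoef lam (n + 1) j + ecoef lam n j) * pch (lam - 1/2) (j + 1) := by
  obtain ⟨r, rfl⟩ : ∃ r, n = j + r := ⟨n - j, by omega⟩
  have e1 : j + r + 1 - j = r + 1 := by omega
  have e2 : j + r - j = r := by omega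
  simp only [ecoef, e1, e2]
  rw [pch_succ_left (2 * (lam - 1/2) + 2 * (j : ℝ)) r]
  rw [show 2 * (lam - 1/2) + 2 * (j : ℝ) + 1 = 2 * lam + 2 * (j : ℝ) by ring]
  rw [pch_succ_right (2 * lam + 2 * (j : ℝ)) r]
  rw [pch_succ_right (lam - 1/2) j]
  have f1 : ((r + 1).factorial : ℝ) = ((r : ℝ) + 1) * (Nat.factorial r : ℝ) := by
    rw [Nat.factorial_succ]; push_cast; ring
  rw [f1]
  have hj0 : (Nat.factorial j : ℝ) ≠ 0 := by positivity
  have hr0 : (Nat.factorial r : ℝ) ≠ 0 := by positivity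
  have hr1 : ((r : ℝ) + 1) ≠ 0 := by positivity
  push_cast
  field_simp
  ring

lemma keyTop (lam : ℝ) (n : ℕ) :
    ecoef (lam - 1/2) (n + 1) (n + 1) * pch lam (n + 1) * ((n : ℝ) + lam + 1/2)
      = ecoef lam (n + 1) (n + 1) * pch (lam - 1/2) (n + 2) := by
  simp only [ecoef, Nat.sub_self, pch_zero]
  rw [pch_succ_right (lam - 1/2) (n + 1)]
  push_cast
  ring

lemma betaReal {a b : ℝ} (ha : 0 < a) (hb : 0 < b) :
    ∫ s in (0:ℝ)..1, s ^ (a - 1) * (1 - s) ^ (b - 1) =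
      Real.Gamma a * Real.Gamma b / Real.Gamma (a + b) := by
  have hab : (0 : ℝ) < a + b := by linarith
  have h := Complex.Gamma_mul_Gamma_eq_betaIntegral
    (s := (a : ℂ)) (t := (b : ℂ)) (by simpa using ha) (by simpa using hb)
  have hbeta : Complex.betaIntegral (a : ℂ) (b : ℂ) =
      ((∫ s in (0:ℝ)..1, s ^ (a - 1) * (1 - s) ^ (b - 1) : ℝ) : ℂ) := by
    rw [Complex.betaIntegral, ← intervalIntegral.integral_ofReal]
    refine intervalIntegral.integral_congr fun s hs => ?_
    rw [Set.uIcc_of_le (by norm_num : (0:ℝ) ≤ 1)] at hs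
    obtain ⟨h0, h1⟩ := hs
    rw [Complex.ofReal_mul, Complex.ofReal_cpow h0, Complex.ofReal_cpow (by linarith : (0:ℝ) ≤ 1 - s)]
    push_cast
    ring
  rw [hbeta] at h
  have hΓab : Complex.Gamma ((a : ℂ) + b) = (Real.Gamma (a + b) : ℂ) := by
    rw [← Complex.ofReal_add, Complex.Gamma_ofReal]
  rw [Complex.Gamma_ofReal, Complex.Gamma_ofReal, hΓab] at h
  have : ((Real.Gamma a * Real.Gamma b : ℝ) : ℂ) =
      ((Real.Gamma (a + b) * ∫ s in (0:ℝ)..1, s ^ (a - 1) * (1 - s) ^ (b - 1) : ℝ) : ℂ) := by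
    push_cast
    exact h
  have h2 := Complex.ofReal_injective this
  have hΓ : Real.Gamma (a + b) ≠ 0 := (Real.Gamma_pos_of_pos hab).ne'
  field_simp
  linarith [h2]

lemma contOn_rpow {c : ℝ} (hc : 0 ≤ c) : Continuous (fun t : ℝ => (1 - t) ^ c) := by
  exact (continuous_const.sub continuous_id).rpow_const (fun t => Or.inr hc)

lemma int_ii {x : ℝ} {c : ℝ} (hc : 0 ≤ c) :
    IntervalIntegrable (fun t => (1 - t) ^ c * (t - x) ^ (-(1/2 : ℝ))) volume x 1 := by
  have h1 : IntervalIntegrable (fun t : ℝ => (t - x) ^ (-(1/2 : ℝ))) volume x 1 := by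
    have := (intervalIntegral.intervalIntegrable_rpow'
      (a := 0) (b := 1 - x) (by norm_num : (-1 : ℝ) < -(1/2))).comp_sub_right x
    simpa using this
  exact h1.continuousOn_mul ((contOn_rpow hc).continuousOn)

lemma int_eval {x : ℝ} (hx : x < 1) {c : ℝ} (hc : 0 ≤ c) :
    ∫ t in x..1, (1 - t) ^ c * (t - x) ^ (-(1/2 : ℝ)) =
      (1 - x) ^ (c + 1/2) * (Real.Gamma (1/2) * Real.Gamma (c + 1) / Real.Gamma (c + 3/2)) := by
  have h1x : (0 : ℝ) < 1 - x := by linarith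
  have hsub := intervalIntegral.integral_comp_mul_add
    (f := fun t => (1 - t) ^ c * (t - x) ^ (-(1/2 : ℝ))) (a := 0) (b := 1)
    (ne_of_gt h1x) x
  simp only [mul_zero, zero_add, mul_one] at hsub
  rw [show (1 : ℝ) - x + x = 1 by ring] at hsub
  have hcongr : ∫ s in (0:ℝ)..1, (1 - ((1 - x) * s + x)) ^ c * ((1 - x) * s + x - x) ^ (-(1/2 : ℝ))
      = (1 - x) ^ (c - 1/2) * ∫ s in (0:ℝ)..1, s ^ ((1/2 : ℝ) - 1) * (1 - s) ^ (c + 1 - 1) := by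
    rw [← intervalIntegral.integral_const_mul]
    refine intervalIntegral.integral_congr fun s hs => ?_
    rw [Set.uIcc_of_le (by norm_num : (0:ℝ) ≤ 1)] at hs
    obtain ⟨h0, h1⟩ := hs
    have e1 : 1 - ((1 - x) * s + x) = (1 - x) * (1 - s) := by ring
    have e2 : (1 - x) * s + x - x = (1 - x) * s := by ring
    rw [e1, e2, Real.mul_rpow (by linarith) (by linarith), Real.mul_rpow (by linarith) h0]
    rw [show c + 1 - 1 = c by ring, show (1/2 : ℝ) - 1 = -(1/2) by norm_num]
    rw [show c - 1/2 = c + (-(1/2)) by ring, Real.rpow_add h1x]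
    ring
  rw [hcongr] at hsub
  have hb := betaReal (a := 1/2) (b := c + 1) (by norm_num) (by linarith)
  rw [hb] at hsub
  -- hsub : (1-x)^(c-1/2) * (Γ(1/2)Γ(c+1)/Γ(1/2+(c+1))) = (1-x)⁻¹ • ∫ t in x..1, ...
  rw [show (1/2 : ℝ) + (c + 1) = c + 3/2 by ring] at hsub
  have : ∫ t in x..1, (1 - t) ^ c * (t - x) ^ (-(1/2 : ℝ))
      = (1 - x) * ((1 - x) ^ (c - 1/2) * (Real.Gamma (1/2) * Real.Gamma (c + 1) / Real.Gamma (c + 3/2))) := by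
    rw [hsub, smul_eq_mul]
    field_simp
  rw [this, ← mul_assoc, show c + 1/2 = 1 + (c - 1/2) by ring, Real.rpow_add h1x, Real.rpow_one]

lemma part1 (lam : ℝ) (hlam : 1 ≤ lam) (n : ℕ) (x : ℝ) (hx : -1 ≤ x) (hx' : x ≤ 1) :
    (1 / Real.Gamma lam) *
        ∫ t in x..(1 : ℝ),
          (1 - t) ^ (lam - 1) * (t - x) ^ (-(1 / 2) : ℝ) * Gegenbauer (lam - 1 / 2) (n + 1) t =
      (Real.sqrt Real.pi / (Real.Gamma (lam - 1 / 2) * ((n : ℝ) + lam + 1 / 2))) *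
        (1 - x) ^ (lam - 1 / 2) * (Gegenbauer lam (n + 1) x + Gegenbauer lam n x) := by
  have hmu : (0 : ℝ) < lam - 1/2 := by linarith
  have hlam0 : (0 : ℝ) < lam := by linarith
  rcases eq_or_lt_of_le hx' with rfl | hxlt
  · rw [intervalIntegral.integral_same, sub_self,
      Real.zero_rpow (by positivity : lam - 1/2 ≠ 0)]
    ring
  -- x < 1
  have h1x : (0 : ℝ) < 1 - x := by linarith
  -- Step 1: rewrite the integral
  have hpt : ∀ t ∈ Set.uIcc x (1 : ℝ),
      (1 - t) ^ (lam - 1) * (t - x) ^ (-(1 / 2) : ℝ) * Gegenbauer (lam - 1 / 2) (n + 1) t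
      = ∑ j ∈ Finset.range (n + 2), (ecoef (lam - 1/2) (n + 1) j * (-1 : ℝ) ^ j) *
          ((1 - t) ^ (lam - 1 + (j : ℝ)) * (t - x) ^ (-(1/2 : ℝ))) := by
    intro t ht
    rw [Set.uIcc_of_le hx'] at ht
    have h1t : (0 : ℝ) ≤ 1 - t := by linarith [ht.2]
    rw [Gegenbauer_eq_Efun hmu, Finset.mul_sum]
    refine Finset.sum_congr rfl fun j _ => ?_
    rw [show t - 1 = -(1 - t) by ring, neg_pow]
    rw [Real.rpow_add_of_nonneg h1t (by linarith) (Nat.cast_nonneg j), Real.rpow_natCast]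
    ring
  rw [intervalIntegral.integral_congr hpt]
  have hswap := intervalIntegral.integral_finset_sum (μ := volume) (a := x) (b := (1:ℝ))
    (s := Finset.range (n + 2))
    (f := fun (j : ℕ) (t : ℝ) => (ecoef (lam - 1/2) (n + 1) j * (-1 : ℝ) ^ j) *
      ((1 - t) ^ (lam - 1 + (j : ℝ)) * (t - x) ^ (-(1/2 : ℝ))))
    (fun j _ =>
      ((int_ii (by linarith [Nat.cast_nonneg (α := ℝ) j] : (0:ℝ) ≤ lam - 1 + (j : ℝ))).const_mul
        (ecoef (lam - 1/2) (n + 1) j * (-1 : ℝ) ^ j)))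
  rw [hswap]
  have hev : ∀ j ∈ Finset.range (n + 2),
      (∫ t in x..(1:ℝ), (ecoef (lam - 1/2) (n + 1) j * (-1 : ℝ) ^ j) *
        ((1 - t) ^ (lam - 1 + (j : ℝ)) * (t - x) ^ (-(1/2 : ℝ))))
      = (ecoef (lam - 1/2) (n + 1) j * (-1 : ℝ) ^ j) *
          ((1 - x) ^ (lam - 1 + (j : ℝ) + 1/2) *
            (Real.Gamma (1/2) * Real.Gamma (lam - 1 + (j : ℝ) + 1) /
              Real.Gamma (lam - 1 + (j : ℝ) + 3/2))) := by
    intro j _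
    rw [intervalIntegral.integral_const_mul,
      int_eval hxlt (by linarith [Nat.cast_nonneg (α := ℝ) j] : (0:ℝ) ≤ lam - 1 + (j : ℝ))]
  rw [Finset.sum_congr rfl hev]
  -- abbreviations
  have hΓlam : Real.Gamma lam ≠ 0 := (Real.Gamma_pos_of_pos hlam0).ne'
  have hΓmu : Real.Gamma (lam - 1/2) ≠ 0 := (Real.Gamma_pos_of_pos hmu).ne'
  have hnl : ((n : ℝ) + lam + 1/2) ≠ 0 := by positivity
  have hper : ∀ j ∈ Finset.range (n + 1),
      (1 / Real.Gamma lam) * ((ecoef (lam - 1/2) (n + 1) j * (-1 : ℝ) ^ j) *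
          ((1 - x) ^ (lam - 1 + (j : ℝ) + 1/2) *
            (Real.Gamma (1/2) * Real.Gamma (lam - 1 + (j : ℝ) + 1) /
              Real.Gamma (lam - 1 + (j : ℝ) + 3/2))))
      = (Real.sqrt Real.pi / (Real.Gamma (lam - 1/2) * ((n : ℝ) + lam + 1/2)) *
            (1 - x) ^ (lam - 1/2) * (ecoef lam (n + 1) j * (x - 1) ^ j)) +
        (Real.sqrt Real.pi / (Real.Gamma (lam - 1/2) * ((n : ℝ) + lam + 1/2)) *
            (1 - x) ^ (lam - 1/2) * (ecoef lam n j * (x - 1) ^ j)) := by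
    intro j hj
    have hjn : j ≤ n := by have := Finset.mem_range.mp hj; omega
    have hA : Real.Gamma (lam - 1 + (j : ℝ) + 1) = pch lam j * Real.Gamma lam := by
      rw [show lam - 1 + (j : ℝ) + 1 = lam + (j : ℕ) by push_cast; ring, Gamma_nat_add hlam0]
    have hB : Real.Gamma (lam - 1 + (j : ℝ) + 3/2)
        = pch (lam - 1/2) (j + 1) * Real.Gamma (lam - 1/2) := by
      rw [show lam - 1 + (j : ℝ) + 3/2 = (lam - 1/2) + ((j + 1 : ℕ) : ℝ) by push_cast; ring,
        Gamma_nat_add hmu]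
    have hC : (1 - x) ^ (lam - 1 + (j : ℝ) + 1/2)
        = (1 - x) ^ (lam - 1/2) * (1 - x) ^ (j : ℕ) := by
      rw [show lam - 1 + (j : ℝ) + 1/2 = (lam - 1/2) + (j : ℝ) by ring,
        Real.rpow_add h1x, Real.rpow_natCast]
    have hD : (x - 1 : ℝ) ^ j = (-1 : ℝ) ^ j * (1 - x) ^ j := by
      rw [show x - 1 = -(1 - x) by ring, neg_pow]
    have hhalf : Real.Gamma (1/2 : ℝ) = Real.sqrt Real.pi := Real.Gamma_one_half_eq
    rw [hA, hB, hC, hD, hhalf]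
    have hpch : pch (lam - 1/2) (j + 1) ≠ 0 := (pch_pos hmu (j + 1)).ne'
    have hkey := keyId lam n j hjn
    set E := ecoef (lam - 1/2) (n + 1) j with hE
    set E1 := ecoef lam (n + 1) j with hE1
    set E2 := ecoef lam n j with hE2
    set Q := pch lam j with hQ
    set P := pch (lam - 1/2) (j + 1) with hP2
    set G1 := Real.Gamma lam with hG1d
    set G2 := Real.Gamma (lam - 1/2) with hG2d
    set N := (n : ℝ) + lam + 1/2 with hNd
    set A := (1 - x) ^ (lam - 1/2) with hAd
    set B := (1 - x) ^ (j : ℕ) with hBd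
    set S := Real.sqrt Real.pi with hSd
    set M := (-1 : ℝ) ^ j with hMd
    field_simp
    linear_combination (S * M * A * B) * hkey
  have htop :
      (1 / Real.Gamma lam) * ((ecoef (lam - 1/2) (n + 1) (n + 1) * (-1 : ℝ) ^ (n + 1)) *
          ((1 - x) ^ (lam - 1 + ((n + 1 : ℕ) : ℝ) + 1/2) *
            (Real.Gamma (1/2) * Real.Gamma (lam - 1 + ((n + 1 : ℕ) : ℝ) + 1) /
              Real.Gamma (lam - 1 + ((n + 1 : ℕ) : ℝ) + 3/2))))
      = Real.sqrt Real.pi / (Real.Gamma (lam - 1/2) * ((n : ℝ) + lam + 1/2)) *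
            (1 - x) ^ (lam - 1/2) * (ecoef lam (n + 1) (n + 1) * (x - 1) ^ (n + 1)) := by
    have hA : Real.Gamma (lam - 1 + ((n + 1 : ℕ) : ℝ) + 1) = pch lam (n + 1) * Real.Gamma lam := by
      rw [show lam - 1 + ((n + 1 : ℕ) : ℝ) + 1 = lam + ((n + 1 : ℕ) : ℝ) by push_cast; ring,
        Gamma_nat_add hlam0]
    have hB : Real.Gamma (lam - 1 + ((n + 1 : ℕ) : ℝ) + 3/2)
        = pch (lam - 1/2) (n + 2) * Real.Gamma (lam - 1/2) := by
      rw [show lam - 1 + ((n + 1 : ℕ) : ℝ) + 3/2 = (lam - 1/2) + ((n + 2 : ℕ) : ℝ) by push_cast; ring,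
        Gamma_nat_add hmu]
    have hC : (1 - x) ^ (lam - 1 + ((n + 1 : ℕ) : ℝ) + 1/2)
        = (1 - x) ^ (lam - 1/2) * (1 - x) ^ (n + 1 : ℕ) := by
      rw [show lam - 1 + ((n + 1 : ℕ) : ℝ) + 1/2 = (lam - 1/2) + ((n + 1 : ℕ) : ℝ) by push_cast; ring,
        Real.rpow_add h1x, Real.rpow_natCast]
    have hD : (x - 1 : ℝ) ^ (n + 1) = (-1 : ℝ) ^ (n + 1) * (1 - x) ^ (n + 1) := by
      rw [show x - 1 = -(1 - x) by ring, neg_pow]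
    have hhalf : Real.Gamma (1/2 : ℝ) = Real.sqrt Real.pi := Real.Gamma_one_half_eq
    rw [hA, hB, hC, hD, hhalf]
    have hpch : pch (lam - 1/2) (n + 2) ≠ 0 := (pch_pos hmu (n + 2)).ne'
    have hkey := keyTop lam n
    set E := ecoef (lam - 1/2) (n + 1) (n + 1) with hE
    set E1 := ecoef lam (n + 1) (n + 1) with hE1
    set Q := pch lam (n + 1) with hQ
    set P := pch (lam - 1/2) (n + 2) with hP2
    set G1 := Real.Gamma lam with hG1d
    set G2 := Real.Gamma (lam - 1/2) with hG2d
    set N := (n : ℝ) + lam + 1/2 with hNd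
    set A := (1 - x) ^ (lam - 1/2) with hAd
    set B := (1 - x) ^ (n + 1 : ℕ) with hBd
    set S := Real.sqrt Real.pi with hSd
    set M := (-1 : ℝ) ^ (n + 1) with hMd
    field_simp
    linear_combination (S * M * A * B) * hkey
  -- assemble
  rw [Gegenbauer_eq_Efun hlam0 (n + 1) x, Gegenbauer_eq_Efun hlam0 n x]
  calc (1 / Real.Gamma lam) * ∑ j ∈ Finset.range (n + 2),
        ((ecoef (lam - 1/2) (n + 1) j * (-1 : ℝ) ^ j) *
          ((1 - x) ^ (lam - 1 + (j : ℝ) + 1/2) *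
            (Real.Gamma (1/2) * Real.Gamma (lam - 1 + (j : ℝ) + 1) /
              Real.Gamma (lam - 1 + (j : ℝ) + 3/2))))
      = ∑ j ∈ Finset.range (n + 1), ((1 / Real.Gamma lam) *
          ((ecoef (lam - 1/2) (n + 1) j * (-1 : ℝ) ^ j) *
          ((1 - x) ^ (lam - 1 + (j : ℝ) + 1/2) *
            (Real.Gamma (1/2) * Real.Gamma (lam - 1 + (j : ℝ) + 1) /
              Real.Gamma (lam - 1 + (j : ℝ) + 3/2)))))
        + (1 / Real.Gamma lam) * ((ecoef (lam - 1/2) (n + 1) (n + 1) * (-1 : ℝ) ^ (n + 1)) *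
          ((1 - x) ^ (lam - 1 + ((n + 1 : ℕ) : ℝ) + 1/2) *
            (Real.Gamma (1/2) * Real.Gamma (lam - 1 + ((n + 1 : ℕ) : ℝ) + 1) /
              Real.Gamma (lam - 1 + ((n + 1 : ℕ) : ℝ) + 3/2)))) := by
        rw [Finset.mul_sum, Finset.sum_range_succ]
    _ = ∑ j ∈ Finset.range (n + 1),
          ((Real.sqrt Real.pi / (Real.Gamma (lam - 1/2) * ((n : ℝ) + lam + 1/2)) *
            (1 - x) ^ (lam - 1/2) * (ecoef lam (n + 1) j * (x - 1) ^ j)) +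
          (Real.sqrt Real.pi / (Real.Gamma (lam - 1/2) * ((n : ℝ) + lam + 1/2)) *
            (1 - x) ^ (lam - 1/2) * (ecoef lam n j * (x - 1) ^ j)))
        + Real.sqrt Real.pi / (Real.Gamma (lam - 1/2) * ((n : ℝ) + lam + 1/2)) *
            (1 - x) ^ (lam - 1/2) * (ecoef lam (n + 1) (n + 1) * (x - 1) ^ (n + 1)) := by
        rw [Finset.sum_congr rfl hper, htop]
    _ = Real.sqrt Real.pi / (Real.Gamma (lam - 1/2) * ((n : ℝ) + lam + 1/2)) *
          (1 - x) ^ (lam - 1/2) *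
          ((∑ j ∈ Finset.range (n + 2), ecoef lam (n + 1) j * (x - 1) ^ j) +
            ∑ j ∈ Finset.range (n + 1), ecoef lam n j * (x - 1) ^ j) := by
        rw [Finset.sum_add_distrib,
          Finset.sum_range_succ (f := fun j => ecoef lam (n + 1) j * (x - 1) ^ j) (n := n + 1),
          ← Finset.mul_sum, ← Finset.mul_sum]
        ring

lemma Gegenbauer_neg (mu : ℝ) (m : ℕ) (x : ℝ) :
    Gegenbauer mu m (-x) = (-1 : ℝ) ^ m * Gegenbauer mu m x := by
  rw [Gegenbauer, Gegenbauer, Finset.mul_sum]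
  refine Finset.sum_congr rfl fun k hk => ?_
  have h2k : 2 * k ≤ m := by have := Finset.mem_range.mp hk; omega
  obtain ⟨r, rfl⟩ : ∃ r, m = 2 * k + r := ⟨m - 2 * k, by omega⟩
  have e1 : 2 * k + r - 2 * k = r := by omega
  rw [e1]
  rw [show 2 * (-x) = -(2 * x) by ring, neg_pow (2 * x) r]
  have hm : (-1 : ℝ) ^ (2 * k + r) = (-1) ^ r := by rw [pow_add, pow_mul]; norm_num
  rw [hm]
  ring

lemma part2 (lam : ℝ) (hlam : 1 ≤ lam) (n : ℕ) (x : ℝ) (hx : -1 ≤ x) (hx' : x ≤ 1) :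
    (1 / Real.Gamma lam) *
        ∫ t in (-1 : ℝ)..x,
          (1 + t) ^ (lam - 1) * (x - t) ^ (-(1 / 2) : ℝ) * Gegenbauer (lam - 1 / 2) (n + 1) t =
      (Real.sqrt Real.pi / (Real.Gamma (lam - 1 / 2) * ((n : ℝ) + lam + 1 / 2))) *
        (1 + x) ^ (lam - 1 / 2) * (Gegenbauer lam (n + 1) x - Gegenbauer lam n x) := by
  have hneg := intervalIntegral.integral_comp_neg (a := -x) (b := (1:ℝ))
    (f := fun t => (1 + t) ^ (lam - 1) * (x - t) ^ (-(1 / 2) : ℝ) *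
      Gegenbauer (lam - 1 / 2) (n + 1) t)
  rw [neg_neg] at hneg
  rw [← hneg]
  have hcongr : ∀ y : ℝ,
      (1 + -y) ^ (lam - 1) * (x - -y) ^ (-(1 / 2) : ℝ) * Gegenbauer (lam - 1 / 2) (n + 1) (-y)
      = (-1 : ℝ) ^ (n + 1) *
        ((1 - y) ^ (lam - 1) * (y - -x) ^ (-(1 / 2) : ℝ) * Gegenbauer (lam - 1 / 2) (n + 1) y) := by
    intro y
    rw [show 1 + -y = 1 - y by ring, show x - -y = y - -x by ring, Gegenbauer_neg]
    ring
  rw [intervalIntegral.integral_congr (fun y _ => hcongr y), intervalIntegral.integral_const_mul]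
  have hp1 := part1 lam hlam n (-x) (by linarith) (by linarith)
  rw [show (1 : ℝ) - -x = 1 + x by ring] at hp1
  rw [Gegenbauer_neg lam (n + 1) x, Gegenbauer_neg lam n x] at hp1
  have h1 : (-1 : ℝ) ^ (n + 1) * (-1 : ℝ) ^ (n + 1) = 1 := by
    rw [← pow_add]
    exact Even.neg_one_pow ⟨n + 1, by ring⟩
  have h2 : (-1 : ℝ) ^ (n + 1) * (-1 : ℝ) ^ n = -1 := by
    rw [← pow_add]
    exact Odd.neg_one_pow ⟨n, by ring⟩
  set K := Real.sqrt Real.pi / (Real.Gamma (lam - 1 / 2) * ((n : ℝ) + lam + 1 / 2))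
  set P := (1 + x) ^ (lam - 1 / 2)
  set G1 := Gegenbauer lam (n + 1) x
  set G0 := Gegenbauer lam n x
  set I := ∫ y in (-x)..(1:ℝ),
    (1 - y) ^ (lam - 1) * (y - -x) ^ (-(1 / 2) : ℝ) * Gegenbauer (lam - 1 / 2) (n + 1) y
  -- hp1 : (1/Γ) * I = K * P * ((-1)^(n+1) G1 + (-1)^n G0)
  -- goal : (1/Γ) * ((-1)^(n+1) * I) = K * P * (G1 - G0)
  have expand : (1 / Real.Gamma lam) * ((-1 : ℝ) ^ (n + 1) * I)
      = (-1 : ℝ) ^ (n + 1) * ((1 / Real.Gamma lam) * I) := by ring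
  rw [expand, hp1]
  linear_combination (K * P * G1) * h1 + (K * P * G0) * h2

end AuxGeg

/-- fractional integrals of `C_{n+1}^{λ−1/2}` for `λ ≥ 1`. -/
theorem stmt13 (lam : ℝ) (hlam : 1 ≤ lam) (n : ℕ) (x : ℝ) (hx : x ∈ Set.Icc (-1 : ℝ) 1) :
    (1 / Real.Gamma lam) *
        ∫ t in x..(1 : ℝ),
          (1 - t) ^ (lam - 1) * (t - x) ^ (-(1 / 2) : ℝ) * Gegenbauer (lam - 1 / 2) (n + 1) t =
      (Real.sqrt Real.pi / (Real.Gamma (lam - 1 / 2) * ((n : ℝ) + lam + 1 / 2))) *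
        (1 - x) ^ (lam - 1 / 2) * (Gegenbauer lam (n + 1) x + Gegenbauer lam n x) ∧
    (1 / Real.Gamma lam) *
        ∫ t in (-1 : ℝ)..x,
          (1 + t) ^ (lam - 1) * (x - t) ^ (-(1 / 2) : ℝ) * Gegenbauer (lam - 1 / 2) (n + 1) t =
      (Real.sqrt Real.pi / (Real.Gamma (lam - 1 / 2) * ((n : ℝ) + lam + 1 / 2))) *
        (1 + x) ^ (lam - 1 / 2) * (Gegenbauer lam (n + 1) x - Gegenbauer lam n x) := by
  exact ⟨part1 lam hlam n x hx.1 hx.2, part2 lam hlam n x hx.1 hx.2⟩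
end
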